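/- arXiv:1511.02576 — 9 statements merged into one kernel-verified Lean document; each statement's English description precedes it below -/
import Mathlib

section
/- Let d ≥ 1 and let U be a unitary d×d complex matrix. Then U D Uᴴ is diagonal for every diagonal density matrix D (i.e., U is a unitary incoherent operation) if and only if there exist a permutation σ of {0,…,d−1} and complex numbers c_0,…,c_{d−1} of modulus 1 such that U has entries U_{ij} = c_j if i = σ(j) and U_{ij} = 0 otherwise (i.e., U is a generalized permutation matrix with unimodular entries). -/
open Matrix BigOperators
open scoped ComplexOrder

noncomputable section

/-- A density matrix on ℂ^d: positive semidefinite with trace 1. -/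
def IsDensityMatrix {d : ℕ} (ρ : Matrix (Fin d) (Fin d) ℂ) : Prop :=
  ρ.PosSemidef ∧ ρ.trace = 1

/-- An incoherent Kraus family: completeness relation plus each Kraus operator
maps diagonal density matrices to diagonal matrices. -/
def IsIncoherentKraus {d : ℕ} {ι : Type} [Fintype ι]
    (K : ι → Matrix (Fin d) (Fin d) ℂ) : Prop :=
  (∑ n, (K n)ᴴ * K n = 1) ∧
  ∀ D : Matrix (Fin d) (Fin d) ℂ, IsDensityMatrix D → D.IsDiag →
    ∀ n, ((K n) * D * (K n)ᴴ).IsDiag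

/-- A unitary incoherent matrix: unitary and U D Uᴴ diagonal for every diagonal
density matrix D. -/
def IsUnitaryIncoherent {d : ℕ} (U : Matrix (Fin d) (Fin d) ℂ) : Prop :=
  U * Uᴴ = 1 ∧ Uᴴ * U = 1 ∧
  ∀ D : Matrix (Fin d) (Fin d) ℂ, IsDensityMatrix D → D.IsDiag → (U * D * Uᴴ).IsDiag

/-- S_MCS: rank-one projections onto unit vectors whose coordinates all have
modulus 1/√d. -/
def InSMCS {d : ℕ} (ρ : Matrix (Fin d) (Fin d) ℂ) : Prop :=
  ∃ ψ : Fin d → ℂ, (∑ j, ‖ψ j‖ ^ 2 = 1) ∧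
    (∀ j, ‖ψ j‖ = 1 / Real.sqrt d) ∧
    ρ = Matrix.vecMulVec ψ (star ψ)

/-- A valid coherence measure: (C1) nonnegativity and vanishing exactly on diagonal
(incoherent) states; (C2) monotonicity under incoherent operations; (C3) monotonicity
on average under subselection; (C4) convexity. -/
def IsValidCoherenceMeasure {d : ℕ} (C : Matrix (Fin d) (Fin d) ℂ → ℝ) : Prop :=
  (∀ ρ, IsDensityMatrix ρ → 0 ≤ C ρ) ∧
  (∀ ρ, IsDensityMatrix ρ → (C ρ = 0 ↔ ρ.IsDiag)) ∧
  (∀ ρ, IsDensityMatrix ρ → ∀ (N : ℕ) (K : Fin N → Matrix (Fin d) (Fin d) ℂ),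
    IsIncoherentKraus K → C (∑ n, K n * ρ * (K n)ᴴ) ≤ C ρ) ∧
  (∀ ρ, IsDensityMatrix ρ → ∀ (N : ℕ) (K : Fin N → Matrix (Fin d) (Fin d) ℂ),
    IsIncoherentKraus K →
    ∑ n ∈ Finset.univ.filter
        (fun n => 0 < (Matrix.trace (K n * ρ * (K n)ᴴ)).re),
      (Matrix.trace (K n * ρ * (K n)ᴴ)).re *
        C ((((Matrix.trace (K n * ρ * (K n)ᴴ)).re : ℂ))⁻¹ • (K n * ρ * (K n)ᴴ)) ≤ C ρ) ∧
  (∀ (M : ℕ) (q : Fin M → ℝ) (ρs : Fin M → Matrix (Fin d) (Fin d) ℂ),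
    (∀ k, 0 ≤ q k) → (∑ k, q k = 1) → (∀ k, IsDensityMatrix (ρs k)) →
    C (∑ k, (q k : ℂ) • ρs k) ≤ ∑ k, q k * C (ρs k))

/-- a unitary U is incoherent iff it is a generalized permutation
matrix with unimodular entries. -/
theorem unitary_incoherent_iff_generalized_permutation
    {d : ℕ} (hd : 1 ≤ d) (U : Matrix (Fin d) (Fin d) ℂ)
    (hU : U * Uᴴ = 1 ∧ Uᴴ * U = 1) :
    (∀ D : Matrix (Fin d) (Fin d) ℂ, IsDensityMatrix D → D.IsDiag →
        (U * D * Uᴴ).IsDiag)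
    ↔ ∃ (σ : Equiv.Perm (Fin d)) (c : Fin d → ℂ),
        (∀ j, ‖c j‖ = 1) ∧
        ∀ i j, U i j = if i = σ j then c j else 0 := by
  obtain ⟨hUU, hUhU⟩ := hU
  constructor
  · intro h
    -- key: columns have mutually "orthogonal" entries
    have key : ∀ (j i k : Fin d), i ≠ k → U i j * star (U k j) = 0 := by
      intro j i k hik
      set v : Fin d → ℂ := fun l => if l = j then 1 else 0 with hv
      have hD : IsDensityMatrix (Matrix.diagonal v) := by
        refine ⟨Matrix.posSemidef_diagonal_iff.mpr ?_, ?_⟩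
        · intro l; by_cases hl : l = j <;> simp [hv, hl]
        · simp [Matrix.trace_diagonal, hv]
      have h2 := h _ hD (Matrix.isDiag_diagonal v) hik
      have hcalc : (U * Matrix.diagonal v * Uᴴ) i k = U i j * star (U k j) := by
        rw [Matrix.mul_apply]
        rw [Finset.sum_eq_single j]
        · simp [Matrix.mul_diagonal, Matrix.conjTranspose_apply, hv]
        · intro b _ hb
          simp [Matrix.mul_diagonal, Matrix.conjTranspose_apply, hv, hb]
        · simp
      have h2' : (U * Matrix.diagonal v * Uᴴ) i k = 0 := h2
      rw [hcalc] at h2'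
      exact h2'
    have col : ∀ j : Fin d, ∑ i, star (U i j) * U i j = 1 := by
      intro j
      have h1 := congrFun (congrFun hUhU j) j
      simpa [Matrix.mul_apply, Matrix.conjTranspose_apply, Matrix.one_apply] using h1
    have hex : ∀ j : Fin d, ∃ i, U i j ≠ 0 := by
      intro j
      by_contra hcon
      push_neg at hcon
      have := col j
      simp [hcon] at this
    set f : Fin d → Fin d := fun j => (hex j).choose with hf
    have hfne : ∀ j, U (f j) j ≠ 0 := fun j => (hex j).choose_spec
    have zero_off : ∀ j i, i ≠ f j → U i j = 0 := by
      intro j i hi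
      have h1 := key j i (f j) hi
      have hs : star (U (f j) j) ≠ 0 := star_ne_zero.mpr (hfne j)
      exact (mul_eq_zero.mp h1).resolve_right hs
    have hinj : Function.Injective f := by
      intro j j' hjj
      by_contra hne
      have h1 := congrFun (congrFun hUhU j) j'
      have h2 : (Uᴴ * U) j j' = 0 := by
        rw [h1]; simp [Matrix.one_apply, hne]
      rw [Matrix.mul_apply] at h2
      simp only [Matrix.conjTranspose_apply] at h2
      rw [Finset.sum_eq_single (f j)] at h2
      · have : U (f j) j' ≠ 0 := by rw [hjj]; exact hfne j'
        exact this ((mul_eq_zero.mp h2).resolve_left (star_ne_zero.mpr (hfne j)))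
      · intro b _ hb
        rw [zero_off j b hb]; simp
      · simp
    have hbij : Function.Bijective f := Finite.injective_iff_bijective.mp hinj
    refine ⟨Equiv.ofBijective f hbij, fun j => U (f j) j, ?_, ?_⟩
    · intro j
      have h1 := col j
      rw [Finset.sum_eq_single (f j)] at h1
      · have h2 : (Complex.normSq (U (f j) j) : ℂ) = 1 := by
          rw [Complex.normSq_eq_conj_mul_self]
          simpa [Complex.star_def] using h1
        have h3 : Complex.normSq (U (f j) j) = 1 := by exact_mod_cast h2
        rw [Complex.norm_def, h3, Real.sqrt_one]
      · intro b _ hb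
        rw [zero_off j b hb]; simp
      · simp
    · intro i j
      by_cases hi : i = f j
      · subst hi; simp [Equiv.ofBijective]
      · rw [zero_off j i hi]
        simp only [Equiv.ofBijective, Equiv.coe_fn_mk]
        simp [hi]
  · rintro ⟨σ, c, hc, hrep⟩ D hDdm hDdiag i k hik
    show (U * D * Uᴴ) i k = 0
    rw [Matrix.mul_apply]
    apply Finset.sum_eq_zero
    intro l _
    rw [Matrix.mul_apply, Finset.sum_mul]
    apply Finset.sum_eq_zero
    intro j _
    rw [hrep i j, Matrix.conjTranspose_apply, hrep k l]
    by_cases h1 : i = σ j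
    · by_cases h2 : k = σ l
      · have hjl : j ≠ l := by
          rintro rfl
          exact hik (h1.trans h2.symm)
        rw [hDdiag hjl]
        simp
      · simp [h2]
    · simp [h1]
end
end

section
/- Let K be a d×d complex matrix such that K D Kᴴ is diagonal for every diagonal density matrix D on ℂ^d. Then every column of K contains at most one nonzero entry: for each column index j there is at most one row index i with K_{ij} ≠ 0. -/
open Matrix BigOperators
open scoped ComplexOrder

noncomputable section

/-- an incoherent Kraus operator has at most one nonzero entry in
every column. -/
theorem incoherent_kraus_column_at_most_one_nonzero
    {d : ℕ} (K : Matrix (Fin d) (Fin d) ℂ)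
    (hK : ∀ D : Matrix (Fin d) (Fin d) ℂ, IsDensityMatrix D → D.IsDiag →
      (K * D * Kᴴ).IsDiag) :
    ∀ j i i', K i j ≠ 0 → K i' j ≠ 0 → i = i' := by
  intro j i i' hi hi'
  by_contra hne
  set D : Matrix (Fin d) (Fin d) ℂ :=
    Matrix.diagonal (fun k => if k = j then 1 else 0) with hD
  have hDens : IsDensityMatrix D := by
    constructor
    · refine Matrix.posSemidef_diagonal_iff.mpr fun k => ?_
      by_cases h : k = j <;> simp [h]
    · simp [hD, Matrix.trace_diagonal]
  have hdiag : D.IsDiag := Matrix.isDiag_diagonal _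
  have h := hK D hDens hdiag hne
  have hcalc : (K * D * Kᴴ) i i' = K i j * star (K i' j) := by
    simp [Matrix.mul_apply, Matrix.diagonal_apply, hD, Matrix.conjTranspose_apply,
      Finset.sum_ite_eq', mul_comm]
  replace h : (K * D * Kᴴ) i i' = 0 := h
  rw [hcalc] at h
  rcases mul_eq_zero.mp h with h0 | h0
  · exact hi h0
  · exact hi' (star_eq_zero.mp h0)
end
end

section
/- Let d ≥ 1 and let ρ be a density matrix on ℂ^d. Then ρ is a maximally coherent state (i.e., for every density matrix σ on ℂ^d there exists an incoherent Kraus family (K_n) with ∑_n K_n ρ K_nᴴ = σ) if and only if ρ belongs to S_MCS. -/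
open Matrix BigOperators
open scoped ComplexOrder

noncomputable section

lemma diag_density {d : ℕ} (j : Fin d) :
    IsDensityMatrix (Matrix.diagonal (Pi.single j (1:ℂ))) := by
  constructor
  · refine Matrix.posSemidef_diagonal_iff.mpr ?_
    intro i
    by_cases h : i = j <;> simp [h, Pi.single_apply]
  · simp [Matrix.trace_diagonal]

lemma col_struct {d N : ℕ} (K : Fin N → Matrix (Fin d) (Fin d) ℂ)
    (hK : IsIncoherentKraus K) (n : Fin N) (j : Fin d) (i i' : Fin d) (h : i ≠ i') :
    K n i j * (starRingEnd ℂ) (K n i' j) = 0 := by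
  have hdiag := hK.2 (Matrix.diagonal (Pi.single j (1:ℂ))) (diag_density j)
    (Matrix.isDiag_diagonal _) n
  have h2 := hdiag h
  beta_reduce at h2
  rw [Matrix.mul_apply] at h2
  simp only [Matrix.mul_apply, Matrix.diagonal_apply, Matrix.conjTranspose_apply,
    ite_mul, zero_mul, Finset.sum_ite_eq, Finset.mem_univ, if_true] at h2
  simpa [Pi.single_apply, Finset.sum_ite_eq] using h2
lemma exists_row {d : ℕ} (K : Matrix (Fin d) (Fin d) ℂ) (v : Fin d → ℂ)
    (hcol : ∀ (j i i' : Fin d), i ≠ i' → K i j * (starRingEnd ℂ) (K i' j) = 0)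
    (h1 : ∀ i, ∃ l, K i l * v l ≠ 0) :
    ∀ l, ∃ r, (K r l * v l ≠ 0) ∧ ∀ l', l' ≠ l → K r l' = 0 := by
  choose g hg using h1
  have hKg : ∀ i, K i (g i) ≠ 0 := fun i => left_ne_zero_of_mul (hg i)
  have hinj : Function.Injective g := by
    intro i i' hii
    by_contra hne
    have := hcol (g i) i i' hne
    rw [hii] at this
    rcases mul_eq_zero.mp this with h | h
    · rw [← hii] at h; exact hKg i h
    · exact hKg i' (by simpa using h)
  have hsurj : Function.Surjective g := Finite.surjective_of_injective hinj
  intro l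
  obtain ⟨r, rfl⟩ := hsurj l
  refine ⟨r, hg r, ?_⟩
  intro l' hl'
  obtain ⟨i'', rfl⟩ := hsurj l'
  have hne : i'' ≠ r := fun h => hl' (by rw [h])
  have := hcol (g i'') i'' r hne
  rcases mul_eq_zero.mp this with h | h
  · exact absurd h (hKg i'')
  · simpa using h
lemma psd_vecMulVec {d : ℕ} (ψ : Fin d → ℂ) :
    (Matrix.vecMulVec ψ (star ψ)).PosSemidef := by
  have : Matrix.vecMulVec ψ (star ψ) =
      (Matrix.replicateCol Unit ψ) * (Matrix.replicateCol Unit ψ)ᴴ := by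
    ext i j
    simp [Matrix.vecMulVec_apply, Matrix.mul_apply, Matrix.replicateCol_apply,
      Matrix.conjTranspose_apply]
  rw [this]
  exact Matrix.posSemidef_self_mul_conjTranspose _
open scoped MatrixOrder

lemma forward {d : ℕ} (hd : 1 ≤ d) (ρ : Matrix (Fin d) (Fin d) ℂ) (hρ : IsDensityMatrix ρ)
    (h : ∀ σ : Matrix (Fin d) (Fin d) ℂ, IsDensityMatrix σ →
      ∃ (N : ℕ) (K : Fin N → Matrix (Fin d) (Fin d) ℂ),
        IsIncoherentKraus K ∧ ∑ n, K n * ρ * (K n)ᴴ = σ) : InSMCS ρ := by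
  have hd0 : (0:ℝ) < d := by exact_mod_cast Nat.lt_of_lt_of_le Nat.zero_lt_one hd
  have hdC : (d:ℂ) ≠ 0 := by exact_mod_cast hd0.ne'
  set u : Fin d → ℂ := fun _ => ((Real.sqrt d)⁻¹ : ℝ) with hu
  set P : Matrix (Fin d) (Fin d) ℂ := Matrix.vecMulVec u (star u) with hPdef
  have hPapply : ∀ i j, P i j = (((d:ℝ)⁻¹ : ℝ) : ℂ) := by
    intro i j
    simp only [hPdef, Matrix.vecMulVec_apply, hu, Pi.star_apply, Complex.star_def,
      Complex.conj_ofReal]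
    rw [← Complex.ofReal_mul]
    congr 1
    rw [← Real.sqrt_inv]
    exact Real.mul_self_sqrt (by positivity)
  have hPdens : IsDensityMatrix P := by
    constructor
    · exact psd_vecMulVec u
    · rw [Matrix.trace]
      simp only [Matrix.diag_apply, hPapply]
      rw [Finset.sum_const, Finset.card_univ, Fintype.card_fin, nsmul_eq_mul]
      rw [← Complex.ofReal_natCast, ← Complex.ofReal_mul]
      rw [mul_inv_cancel₀ hd0.ne']
      simp
  obtain ⟨N, K, hK, hsum⟩ := h P hPdens
  set s : Matrix (Fin d) (Fin d) ℂ := CFC.sqrt ρ with hsdef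
  have hss : s * s = ρ := CFC.sqrt_mul_sqrt_self ρ hρ.1.nonneg
  have hsherm : sᴴ = s := (CFC.sqrt_nonneg ρ).posSemidef.1
  have hMM : ∑ n, (K n * s) * (K n * s)ᴴ = P := by
    rw [← hsum]
    refine Finset.sum_congr rfl fun n _ => ?_
    rw [Matrix.conjTranspose_mul, hsherm, ← hss]
    rw [Matrix.mul_assoc, Matrix.mul_assoc, Matrix.mul_assoc]
  have hE : ∀ i i', ∑ n, ∑ j, (K n * s) i j * (starRingEnd ℂ) ((K n * s) i' j)
      = (((d:ℝ)⁻¹ : ℝ) : ℂ) := by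
    intro i i'
    have := congrFun (congrFun hMM i) i'
    rw [Matrix.sum_apply] at this
    simp only [Matrix.mul_apply, Matrix.conjTranspose_apply] at this
    rw [hPapply] at this
    rw [← this]
    rfl
  have key : ∀ (n : Fin N) (i i' j : Fin d), (K n * s) i j = (K n * s) i' j := by
    have main : ∀ i i' : Fin d,
        ∑ n, ∑ j, ((K n * s) i j - (K n * s) i' j) *
          (starRingEnd ℂ) ((K n * s) i j - (K n * s) i' j) = 0 := by
      intro i i'
      have h4 : ∑ n, ∑ j, ((K n * s) i j - (K n * s) i' j) *
          (starRingEnd ℂ) ((K n * s) i j - (K n * s) i' j)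
          = (∑ n, ∑ j, (K n * s) i j * (starRingEnd ℂ) ((K n * s) i j))
            - (∑ n, ∑ j, (K n * s) i j * (starRingEnd ℂ) ((K n * s) i' j))
            - (∑ n, ∑ j, (K n * s) i' j * (starRingEnd ℂ) ((K n * s) i j))
            + (∑ n, ∑ j, (K n * s) i' j * (starRingEnd ℂ) ((K n * s) i' j)) := by
        rw [← Finset.sum_sub_distrib, ← Finset.sum_sub_distrib, ← Finset.sum_add_distrib]
        refine Finset.sum_congr rfl fun n _ => ?_
        rw [← Finset.sum_sub_distrib, ← Finset.sum_sub_distrib, ← Finset.sum_add_distrib]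
        refine Finset.sum_congr rfl fun j _ => ?_
        rw [map_sub]
        ring
      rw [h4, hE i i, hE i i', hE i' i, hE i' i']
      ring
    intro n i i' j
    have hreal : ∑ n, ∑ j, Complex.normSq ((K n * s) i j - (K n * s) i' j) = 0 := by
      have hc : ((∑ n, ∑ j, Complex.normSq ((K n * s) i j - (K n * s) i' j) : ℝ) : ℂ) = 0 := by
        push_cast
        rw [← main i i']
        refine Finset.sum_congr rfl fun n _ => Finset.sum_congr rfl fun j _ => ?_
        exact (Complex.mul_conj _).symm
      exact_mod_cast hc
    have h1 : ∀ n ∈ Finset.univ, (0:ℝ) ≤ ∑ j, Complex.normSq ((K n * s) i j - (K n * s) i' j) :=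
      fun n _ => Finset.sum_nonneg fun j _ => Complex.normSq_nonneg _
    have h2 := (Finset.sum_eq_zero_iff_of_nonneg h1).mp hreal n (Finset.mem_univ n)
    have h3 := (Finset.sum_eq_zero_iff_of_nonneg
      (fun j _ => Complex.normSq_nonneg ((K n * s) i j - (K n * s) i' j))).mp h2 j
      (Finset.mem_univ j)
    exact sub_eq_zero.mp (Complex.normSq_eq_zero.mp h3)
  set i0 : Fin d := ⟨0, hd⟩ with hi0
  set m : Fin N → Fin d → ℂ := fun n j => (K n * s) i0 j with hmdef
  have hm : ∀ n i j, (K n * s) i j = m n j := fun n i j => key n i i0 j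
  have hrow : ∀ n i j, ∑ l, K n i l * s l j = m n j := by
    intro n i j
    rw [← Matrix.mul_apply, hm]
  have hmsum : ∑ n, ∑ j, Complex.normSq (m n j) = (d:ℝ)⁻¹ := by
    have := hE i0 i0
    have hc : ((∑ n, ∑ j, Complex.normSq (m n j) : ℝ) : ℂ) = (((d:ℝ)⁻¹ : ℝ) : ℂ) := by
      rw [← this]
      push_cast
      exact Finset.sum_congr rfl fun n _ => Finset.sum_congr rfl fun j _ =>
        (Complex.mul_conj _).symm
    exact_mod_cast hc
  have hex : ∃ n0 : Fin N, ∃ jst : Fin d, m n0 jst ≠ 0 := by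
    by_contra hcon
    push_neg at hcon
    have : ∑ n, ∑ j, Complex.normSq (m n j) = 0 := by
      refine Finset.sum_eq_zero fun n _ => Finset.sum_eq_zero fun j _ => ?_
      rw [hcon n j]; simp
    rw [hmsum] at this
    exact (inv_ne_zero hd0.ne') this
  obtain ⟨n0, jst, hjst⟩ := hex
  have hcol : ∀ (n : Fin N) (j i i' : Fin d), i ≠ i' →
      K n i j * (starRingEnd ℂ) (K n i' j) = 0 := fun n j i i' hne => col_struct K hK n j i i' hne
  -- rank-one structure of s
  have hrowchoice : ∀ i, ∃ l, K n0 i l * s l jst ≠ 0 := by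
    intro i
    have hs0 : ∑ l, K n0 i l * s l jst ≠ 0 := by rw [hrow]; exact hjst
    obtain ⟨l, _, hl⟩ := Finset.exists_ne_zero_of_sum_ne_zero hs0
    exact ⟨l, hl⟩
  obtain ⟨r0, hr0⟩ := Classical.axiomOfChoice (exists_row (K n0) (fun l => s l jst) (hcol n0) hrowchoice)
  have hK0ne : ∀ l, K n0 (r0 l) l ≠ 0 := fun l => left_ne_zero_of_mul (hr0 l).1
  set c : Fin d → ℂ := fun l => (K n0 (r0 l) l)⁻¹ with hcdef
  have hcne : ∀ l, c l ≠ 0 := fun l => inv_ne_zero (hK0ne l)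
  have hslj : ∀ l j, s l j = c l * m n0 j := by
    intro l j
    have hr := hrow n0 (r0 l) j
    rw [Finset.sum_eq_single l (fun l' _ hl' => by rw [(hr0 l).2 l' hl']; ring)
      (fun hl => absurd (Finset.mem_univ l) hl)] at hr
    rw [← hr, hcdef]
    exact (inv_mul_cancel_left₀ (hK0ne l) _).symm
  set Nm : ℝ := ∑ j, Complex.normSq (m n0 j) with hNmdef
  have hNm0 : 0 < Nm := by
    refine Finset.sum_pos' (fun j _ => Complex.normSq_nonneg _) ⟨jst, Finset.mem_univ _, ?_⟩
    exact Complex.normSq_pos.mpr hjst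
  have hq : ∀ (n : Fin N) (i : Fin d) (j : Fin d),
      (∑ l, K n i l * c l) * m n0 j = m n j := by
    intro n i j
    rw [Finset.sum_mul, ← hrow n i j]
    refine Finset.sum_congr rfl fun l _ => ?_
    rw [hslj l j]
    ring
  set tt : Fin N → ℂ := fun n => m n jst / m n0 jst with httdef
  have ht : ∀ (n : Fin N) (i : Fin d), (∑ l, K n i l * c l) = tt n := by
    intro n i
    rw [httdef]
    rw [eq_div_iff hjst]
    exact hq n i jst
  have hmt : ∀ (n : Fin N) (j : Fin d), m n j = tt n * m n0 j := by
    intro n j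
    rw [← hq n i0 j, ht n i0]
  have hsumt : (∑ n, Complex.normSq (tt n)) * Nm = (d:ℝ)⁻¹ := by
    rw [← hmsum, Finset.sum_mul]
    refine Finset.sum_congr rfl fun n _ => ?_
    rw [hNmdef, Finset.mul_sum]
    refine Finset.sum_congr rfl fun j _ => ?_
    rw [hmt n j, Complex.normSq_mul]
  have hcompl : ∀ l, ∑ n, ∑ i, Complex.normSq (K n i l) = 1 := by
    intro l
    have h1 := congrFun (congrFun hK.1 l) l
    rw [Matrix.sum_apply] at h1
    simp only [Matrix.mul_apply, Matrix.conjTranspose_apply, Matrix.one_apply_eq] at h1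
    have hc : ((∑ n, ∑ i, Complex.normSq (K n i l) : ℝ) : ℂ) = 1 := by
      rw [← h1]
      push_cast
      refine Finset.sum_congr rfl fun n _ => Finset.sum_congr rfl fun i _ => ?_
      rw [Complex.star_def, mul_comm, Complex.mul_conj]
    exact_mod_cast hc
  set R : Fin d → ℝ := fun l => Complex.normSq (c l) * Nm with hRdef
  have hR0 : ∀ l, 0 < R l := fun l =>
    mul_pos (Complex.normSq_pos.mpr (hcne l)) hNm0
  have hRge : ∀ l, (d:ℝ)⁻¹ ≤ R l := by
    intro l
    -- for each n with tt n ≠ 0, find a row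
    have hrows : ∀ n, tt n ≠ 0 → ∃ r, Complex.normSq (K n r l) * Complex.normSq (c l)
        = Complex.normSq (tt n) := by
      intro n htn
      have hch : ∀ i, ∃ l', K n i l' * c l' ≠ 0 := by
        intro i
        have : ∑ l', K n i l' * c l' ≠ 0 := by rw [ht n i]; exact htn
        obtain ⟨l', _, hl'⟩ := Finset.exists_ne_zero_of_sum_ne_zero this
        exact ⟨l', hl'⟩
      obtain ⟨r, hr1, hr2⟩ := exists_row (K n) c (hcol n) hch l
      refine ⟨r, ?_⟩
      have : K n r l * c l = tt n := by
        rw [← ht n r]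
        rw [Finset.sum_eq_single l (fun l' _ hl' => by rw [hr2 l' hl']; ring)
          (fun hl => absurd (Finset.mem_univ l) hl)]
      rw [← this, Complex.normSq_mul]
    classical
    set T : Finset (Fin N) := Finset.univ.filter (fun n => tt n ≠ 0) with hT
    have hsum1 : ∑ n ∈ T, Complex.normSq (tt n) = ∑ n, Complex.normSq (tt n) := by
      rw [hT]
      refine Finset.sum_filter_of_ne fun n _ hn => ?_
      intro h0
      rw [h0] at hn
      simp at hn
    have hcl0 : Complex.normSq (c l) ≠ 0 := ne_of_gt (Complex.normSq_pos.mpr (hcne l))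
    have hb : ∑ n ∈ T, Complex.normSq (tt n) ≤ Complex.normSq (c l) := by
      calc ∑ n ∈ T, Complex.normSq (tt n)
          = ∑ n ∈ T, Complex.normSq (c l) * (Complex.normSq (tt n) / Complex.normSq (c l)) := by
            refine Finset.sum_congr rfl fun n _ => ?_
            rw [mul_comm, div_mul_cancel₀ _ hcl0]
        _ ≤ ∑ n ∈ T, Complex.normSq (c l) * (∑ i, Complex.normSq (K n i l)) := by
            refine Finset.sum_le_sum fun n hn => ?_
            have htn : tt n ≠ 0 := (Finset.mem_filter.mp hn).2
            obtain ⟨r, hr⟩ := hrows n htn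
            rw [mul_comm (Complex.normSq (c l)) _, div_mul_cancel₀ _ hcl0, ← hr,
              mul_comm (Complex.normSq (K n r l)) _]
            refine mul_le_mul_of_nonneg_left ?_ (Complex.normSq_nonneg _)
            exact Finset.single_le_sum (f := fun i => Complex.normSq (K n i l))
              (fun i _ => Complex.normSq_nonneg _) (Finset.mem_univ r)
        _ = Complex.normSq (c l) * ∑ n ∈ T, (∑ i, Complex.normSq (K n i l)) := by
            rw [Finset.mul_sum]
        _ ≤ Complex.normSq (c l) * ∑ n, (∑ i, Complex.normSq (K n i l)) := by
            refine mul_le_mul_of_nonneg_left ?_ (Complex.normSq_nonneg _)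
            refine Finset.sum_le_sum_of_subset_of_nonneg (Finset.filter_subset _ _)
              (fun n _ _ => Finset.sum_nonneg fun i _ => Complex.normSq_nonneg _)
        _ = Complex.normSq (c l) := by rw [hcompl l, mul_one]
    rw [hsum1] at hb
    -- (∑ normSq tt) * Nm = d⁻¹ and ∑ normSq tt ≤ normSq (c l)
    rw [← hsumt, hRdef]
    exact mul_le_mul_of_nonneg_right hb hNm0.le
  have hRll : ∀ l, ρ l l = ((R l : ℝ) : ℂ) := by
    intro l
    have hreal : ∑ k, Complex.normSq (s l k) = R l := by
      simp only [hRdef, hNmdef, Finset.mul_sum]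
      refine Finset.sum_congr rfl fun k _ => ?_
      rw [hslj l k, Complex.normSq_mul]
    have hconj : ∀ k, s l k * s k l = ((Complex.normSq (s l k) : ℝ) : ℂ) := by
      intro k
      have : s k l = (starRingEnd ℂ) (s l k) := by
        conv_lhs => rw [← hsherm]
        rfl
      rw [this, Complex.mul_conj]
    rw [← hss, Matrix.mul_apply]
    rw [Finset.sum_congr rfl fun k _ => hconj k, ← hreal]
    push_cast
    rfl
  have htrace : ∑ l, R l = 1 := by
    have h1 : ρ.trace = 1 := hρ.2
    rw [Matrix.trace] at h1
    have : (((∑ l, R l : ℝ)) : ℂ) = 1 := by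
      push_cast
      rw [← h1]
      exact Finset.sum_congr rfl fun l _ => (hRll l).symm
    exact_mod_cast this
  have hReq : ∀ l, R l = (d:ℝ)⁻¹ := by
    intro l
    by_contra hne
    have hlt : (d:ℝ)⁻¹ < R l := lt_of_le_of_ne (hRge l) (Ne.symm hne)
    have : ∑ l', (fun _ => (d:ℝ)⁻¹) l' < ∑ l', R l' :=
      Finset.sum_lt_sum (fun l' _ => hRge l') ⟨l, Finset.mem_univ l, hlt⟩
    rw [htrace] at this
    simp only [Finset.sum_const, Finset.card_univ, Fintype.card_fin, nsmul_eq_mul] at this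
    rw [mul_inv_cancel₀ hd0.ne'] at this
    exact lt_irrefl 1 this
  set T : ℂ := ∑ k, m n0 k * c k with hTdef
  have hρform : ∀ a b, ρ a b = c a * T * m n0 b := by
    intro a b
    have h2 : c a * (∑ k, m n0 k * c k) * m n0 b = ∑ k, s a k * s k b := by
      rw [Finset.mul_sum, Finset.sum_mul]
      refine Finset.sum_congr rfl fun k _ => ?_
      rw [hslj a k, hslj k b]; ring
    rw [← hss, Matrix.mul_apply, hTdef, ← h2]
  have hdd : ((d:ℂ)) * (((d:ℝ)⁻¹ : ℝ) : ℂ) = 1 := by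
    push_cast
    exact mul_inv_cancel₀ hdC
  have hsqd : ((Real.sqrt d : ℝ) : ℂ) * ((Real.sqrt d : ℝ) : ℂ) = (d:ℂ) := by
    rw [← Complex.ofReal_mul, Real.mul_self_sqrt hd0.le]
    push_cast
    rfl
  set ψ : Fin d → ℂ := fun l => ((Real.sqrt d : ℝ) : ℂ) * ρ l i0 with hψdef
  have hconjρ : ∀ b, (starRingEnd ℂ) (ρ b i0) = ρ i0 b := by
    intro b
    exact hρ.1.1.apply i0 b
  have hrep : ∀ a b, ψ a * (starRingEnd ℂ) (ψ b) = ρ a b := by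
    intro a b
    simp only [hψdef]
    simp only [_root_.map_mul, Complex.conj_ofReal, hconjρ b]
    have h2 : ρ a i0 * ρ i0 b = ρ i0 i0 * ρ a b := by
      rw [hρform a i0, hρform i0 b, hρform i0 i0, hρform a b]; ring
    calc ((Real.sqrt d : ℝ) : ℂ) * ρ a i0 * (((Real.sqrt d : ℝ) : ℂ) * ρ i0 b)
        = (((Real.sqrt d : ℝ) : ℂ) * ((Real.sqrt d : ℝ) : ℂ)) * (ρ a i0 * ρ i0 b) := by ring
      _ = (d:ℂ) * (ρ i0 i0 * ρ a b) := by rw [hsqd, h2]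
      _ = ((d:ℂ) * (((d:ℝ)⁻¹ : ℝ) : ℂ)) * ρ a b := by rw [hRll i0, hReq i0]; ring
      _ = ρ a b := by rw [hdd, one_mul]
  have habs2 : ∀ j, ‖ψ j‖ ^ 2 = (d:ℝ)⁻¹ := by
    intro j
    rw [Complex.sq_norm]
    have hcx : ((Complex.normSq (ψ j) : ℝ) : ℂ) = (((d:ℝ)⁻¹ : ℝ) : ℂ) := by
      rw [← Complex.mul_conj, hrep j j, hRll j, hReq j]
    exact_mod_cast hcx
  refine ⟨ψ, ?_, ?_, ?_⟩
  · rw [Finset.sum_congr rfl fun j _ => habs2 j]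
    rw [Finset.sum_const, Finset.card_univ, Fintype.card_fin, nsmul_eq_mul]
    exact mul_inv_cancel₀ hd0.ne'
  · intro j
    have h1 : ‖ψ j‖ = Real.sqrt ((d:ℝ)⁻¹) := by
      rw [← habs2 j, Real.sqrt_sq (norm_nonneg _)]
    rw [h1, Real.sqrt_inv, one_div]
  · ext a b
    rw [Matrix.vecMulVec_apply]
    exact (hrep a b).symm
lemma backward {d : ℕ} (hd : 1 ≤ d) (ρ : Matrix (Fin d) (Fin d) ℂ) (hS : InSMCS ρ)
    (σ : Matrix (Fin d) (Fin d) ℂ) (hσ : IsDensityMatrix σ) :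
    ∃ (N : ℕ) (K : Fin N → Matrix (Fin d) (Fin d) ℂ),
      IsIncoherentKraus K ∧ ∑ n, K n * ρ * (K n)ᴴ = σ := by
  haveI : NeZero d := ⟨by omega⟩
  have hd0 : (0:ℝ) < d := by exact_mod_cast Nat.lt_of_lt_of_le Nat.zero_lt_one hd
  have hsq0 : (0:ℝ) < Real.sqrt d := Real.sqrt_pos.mpr hd0
  obtain ⟨ψ, hψ1, hψmod, hρeq⟩ := hS
  have hψψ : ∀ j, (starRingEnd ℂ) (ψ j) * ψ j = (((d:ℝ)⁻¹ : ℝ) : ℂ) := by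
    intro j
    rw [mul_comm, Complex.mul_conj]
    congr 1
    rw [← Complex.sq_norm, hψmod j, div_pow, one_pow, Real.sq_sqrt hd0.le]
    rw [one_div]
  set t : Matrix (Fin d) (Fin d) ℂ := CFC.sqrt σ with htdef
  have htt : t * t = σ := CFC.sqrt_mul_sqrt_self σ hσ.1.nonneg
  have hth : t.IsHermitian := (CFC.sqrt_nonneg σ).posSemidef.1
  have hconjt : ∀ a b, (starRingEnd ℂ) (t a b) = t b a := fun a b => hth.apply b a
  set B : Fin d × Fin d → Matrix (Fin d) (Fin d) ℂ := fun p => Matrix.of fun i j =>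
    if i = j + p.2 then t i p.1 * ((Real.sqrt d : ℝ) : ℂ) * (starRingEnd ℂ) (ψ j) else 0
    with hBdef
  have hBapp : ∀ (k n : Fin d) (i j : Fin d), B (k, n) i j =
      if i = j + n then t i k * ((Real.sqrt d : ℝ) : ℂ) * (starRingEnd ℂ) (ψ j) else 0 :=
    fun k n i j => rfl
  refine ⟨d * d, fun a => B (finProdFinEquiv.symm a), ⟨?_, ?_⟩, ?_⟩
  · -- completeness
    rw [Equiv.sum_comp (finProdFinEquiv.symm) (fun p => (B p)ᴴ * B p), Fintype.sum_prod_type]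
    ext l l'
    rw [Matrix.sum_apply]
    simp only [Matrix.sum_apply, Matrix.mul_apply, Matrix.conjTranspose_apply,
      Complex.star_def]
    by_cases hll : l = l'
    · subst hll
      rw [Matrix.one_apply_eq]
      have hinner : ∀ (k n : Fin d), ∑ i, (starRingEnd ℂ) (B (k, n) i l) * B (k, n) i l
          = ((Complex.normSq (t (l + n) k) : ℝ) : ℂ) := by
        intro k n
        rw [Finset.sum_eq_single (l + n)]
        · rw [hBapp, if_pos rfl, mul_comm, Complex.mul_conj]
          rw [Complex.normSq_mul, Complex.normSq_mul]
          have h1 : Complex.normSq (((Real.sqrt d : ℝ) : ℂ)) = d := by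
            rw [Complex.normSq_ofReal, Real.mul_self_sqrt hd0.le]
          have h2 : Complex.normSq ((starRingEnd ℂ) (ψ l)) = (d:ℝ)⁻¹ := by
            rw [Complex.normSq_conj, ← Complex.sq_norm, hψmod l, div_pow, one_pow,
              Real.sq_sqrt hd0.le, one_div]
          rw [h1, h2]
          push_cast
          field_simp
        · intro i _ hi
          rw [hBapp, if_neg hi]
          simp
        · intro h
          exact absurd (Finset.mem_univ _) h
      rw [Finset.sum_congr rfl fun k _ => Finset.sum_congr rfl fun n _ => hinner k n]
      -- reindex and use trace
      have hre : ∀ k, ∑ n, ((Complex.normSq (t (l + n) k) : ℝ) : ℂ)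
          = ∑ i, ((Complex.normSq (t i k) : ℝ) : ℂ) :=
        fun k => Equiv.sum_comp (Equiv.addLeft l) (fun i => ((Complex.normSq (t i k) : ℝ) : ℂ))
      rw [Finset.sum_congr rfl fun k _ => hre k]
      have htr : ∑ k, ∑ i, ((Complex.normSq (t i k) : ℝ) : ℂ) = σ.trace := by
        rw [← htt, Matrix.trace, Finset.sum_comm]
        refine Finset.sum_congr rfl fun i _ => ?_
        rw [Matrix.diag_apply, Matrix.mul_apply]
        refine Finset.sum_congr rfl fun k _ => ?_
        rw [← Complex.mul_conj, hconjt]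
      rw [htr, hσ.2]
    · rw [Matrix.one_apply_ne hll]
      refine Finset.sum_eq_zero fun k _ => Finset.sum_eq_zero fun n _ =>
        Finset.sum_eq_zero fun i _ => ?_
      rw [hBapp, hBapp]
      split_ifs with h1 h2
      · exact absurd (add_right_cancel ((h1.symm).trans h2)) hll
      · simp
      · simp
      · simp
  · -- incoherence
    intro D hD hdiag a
    intro i i' hne
    have : ∀ x, (B (finProdFinEquiv.symm a) * D) i x * (B (finProdFinEquiv.symm a))ᴴ x i' = 0 := by
      intro j'
      rw [Matrix.mul_apply, Matrix.conjTranspose_apply]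
      set p := finProdFinEquiv.symm a
      rw [Finset.sum_mul]
      refine Finset.sum_eq_zero fun j _ => ?_
      rcases eq_or_ne j j' with rfl | hjj
      · show B p i j * D j j * (starRingEnd ℂ) (B p i' j) = 0
        rcases eq_or_ne i (j + p.2) with hi | hi
        · rcases eq_or_ne i' (j + p.2) with hi' | hi'
          · exact absurd (hi.trans hi'.symm) hne
          · have : B p i' j = 0 := by rw [hBdef]; exact if_neg hi'
            rw [this]
            simp
        · have : B p i j = 0 := by rw [hBdef]; exact if_neg hi
          rw [this]
          simp
      · rw [hdiag hjj]
        simp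
    rw [Matrix.mul_apply]
    exact Finset.sum_eq_zero fun x _ => this x
  · -- the sum equals σ
    rw [Equiv.sum_comp (finProdFinEquiv.symm) (fun p => B p * ρ * (B p)ᴴ), Fintype.sum_prod_type]
    ext i i'
    rw [Matrix.sum_apply]
    have hBρB : ∀ (k n : Fin d), (B (k,n) * ρ * (B (k,n))ᴴ) i i'
        = (∑ j, B (k,n) i j * ψ j) * (starRingEnd ℂ) (∑ j, B (k,n) i' j * ψ j) := by
      intro k n
      have hBρ : ∀ (a j' : Fin d), (B (k,n) * ρ) a j'
          = (∑ j, B (k,n) a j * ψ j) * (starRingEnd ℂ) (ψ j') := by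
        intro a j'
        rw [Matrix.mul_apply, hρeq, Finset.sum_mul]
        refine Finset.sum_congr rfl fun j _ => ?_
        rw [Matrix.vecMulVec_apply, Pi.star_apply]
        simp only [Complex.star_def]
        ring
      rw [Matrix.mul_apply]
      rw [Finset.sum_congr rfl fun j' (_ : j' ∈ (Finset.univ : Finset (Fin d))) => by
        rw [hBρ i j']]
      rw [map_sum, Finset.mul_sum]
      refine Finset.sum_congr rfl fun j' _ => ?_
      rw [Matrix.conjTranspose_apply, _root_.map_mul]
      simp only [Complex.star_def]
      ring
    have hBψ : ∀ (k n : Fin d) (a : Fin d), ∑ j, B (k,n) a j * ψ j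
        = t a k * (((Real.sqrt d)⁻¹ : ℝ) : ℂ) := by
      intro k n a
      have hfac : ((Real.sqrt d : ℝ) : ℂ) * (((d:ℝ)⁻¹ : ℝ) : ℂ) = (((Real.sqrt d)⁻¹ : ℝ) : ℂ) := by
        rw [← Complex.ofReal_mul]
        congr 1
        field_simp
        exact Real.sq_sqrt hd0.le
      rw [Finset.sum_eq_single (a - n)]
      · rw [hBapp, if_pos (by rw [sub_add_cancel]), mul_assoc, mul_assoc, hψψ, ← mul_assoc, mul_assoc, hfac]
      · intro j _ hj
        rw [hBapp, if_neg, zero_mul]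
        intro hcon
        exact hj (by rw [hcon]; exact (add_sub_cancel_right j n).symm)
      · intro h
        exact absurd (Finset.mem_univ _) h
    have hfac2 : (((Real.sqrt d)⁻¹ : ℝ) : ℂ) * (((Real.sqrt d)⁻¹ : ℝ) : ℂ) = (((d:ℝ)⁻¹ : ℝ) : ℂ) := by
      rw [← Complex.ofReal_mul]
      congr 1
      rw [← mul_inv, Real.mul_self_sqrt hd0.le]
    have hval : ∀ (k n : Fin d), (B (k,n) * ρ * (B (k,n))ᴴ) i i'
        = t i k * t k i' * (((d:ℝ)⁻¹ : ℝ) : ℂ) := by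
      intro k n
      rw [hBρB k n, hBψ k n i, hBψ k n i', _root_.map_mul, Complex.conj_ofReal, hconjt]
      calc t i k * (((Real.sqrt d)⁻¹ : ℝ) : ℂ) * (t k i' * (((Real.sqrt d)⁻¹ : ℝ) : ℂ))
          = t i k * t k i' * ((((Real.sqrt d)⁻¹ : ℝ) : ℂ) * (((Real.sqrt d)⁻¹ : ℝ) : ℂ)) := by ring
        _ = t i k * t k i' * (((d:ℝ)⁻¹ : ℝ) : ℂ) := by rw [hfac2]
    simp only [Matrix.sum_apply]
    rw [Finset.sum_congr rfl fun k (_ : k ∈ (Finset.univ : Finset (Fin d))) =>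
      Finset.sum_congr rfl fun n (_ : n ∈ (Finset.univ : Finset (Fin d))) => hval k n]
    rw [Finset.sum_congr rfl fun k (_ : k ∈ (Finset.univ : Finset (Fin d))) =>
      (Finset.sum_const (t i k * t k i' * (((d:ℝ)⁻¹ : ℝ) : ℂ)))]
    simp only [Finset.card_univ, Fintype.card_fin, nsmul_eq_mul]
    rw [← htt, Matrix.mul_apply]
    refine Finset.sum_congr rfl fun k _ => ?_
    push_cast
    field_simp

/-- ρ is a maximally coherent state iff ρ ∈ S_MCS. -/
theorem maximally_coherent_iff_SMCS
    {d : ℕ} (hd : 1 ≤ d) (ρ : Matrix (Fin d) (Fin d) ℂ) (hρ : IsDensityMatrix ρ) :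
    (∀ σ : Matrix (Fin d) (Fin d) ℂ, IsDensityMatrix σ →
      ∃ (N : ℕ) (K : Fin N → Matrix (Fin d) (Fin d) ℂ),
        IsIncoherentKraus K ∧ ∑ n, K n * ρ * (K n)ᴴ = σ) ↔ InSMCS ρ :=
  ⟨fun h => forward hd ρ hρ h, fun hS σ hσ => backward hd ρ hS σ hσ⟩
end
end

section
/- Let C be a valid coherence measure on d×d density matrices. Then every state of S_MCS attains the maximum value of C: for every ρ ∈ S_MCS and every density matrix σ on ℂ^d, C(σ) ≤ C(ρ); moreover C takes the same value on all states of S_MCS. -/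
open Matrix BigOperators
open scoped ComplexOrder

noncomputable section

lemma trace_vmv {d : ℕ} (v : Fin d → ℂ) (hv : ∑ j, ‖v j‖ ^ 2 = 1) :
    (Matrix.vecMulVec v (star v)).trace = 1 := by
  simp only [Matrix.trace, Matrix.vecMulVec_apply, Matrix.diag, Pi.star_apply,
    Complex.star_def, Complex.mul_conj, Complex.sq_norm]
  rw [← Complex.ofReal_sum]
  norm_cast
  simpa [Complex.sq_norm] using hv

lemma dm_vmv {d : ℕ} (v : Fin d → ℂ) (hv : ∑ j, ‖v j‖ ^ 2 = 1) :
    IsDensityMatrix (Matrix.vecMulVec v (star v)) := by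
  constructor
  · have : Matrix.vecMulVec v (star v) = (Matrix.replicateCol Unit v) * (Matrix.replicateCol Unit v)ᴴ := by
      ext i j
      simp [Matrix.vecMulVec, Matrix.mul_apply, Matrix.replicateCol]
    rw [this]
    exact Matrix.posSemidef_self_mul_conjTranspose _
  · exact trace_vmv v hv

lemma star_mul_self_eq_sq_abs (z : ℂ) : star z * z = ((‖z‖ ^ 2 : ℝ) : ℂ) := by
  rw [Complex.star_def, mul_comm, Complex.mul_conj, Complex.normSq_eq_norm_sq]

lemma pure_le_MCS {d : ℕ} (C : Matrix (Fin d) (Fin d) ℂ → ℝ)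
    (hC : IsValidCoherenceMeasure C) (ψ : Fin d → ℂ)
    (hψ1 : ∑ j, ‖ψ j‖ ^ 2 = 1)
    (hψ2 : ∀ j, ‖ψ j‖ = 1 / Real.sqrt d)
    (φ : Fin d → ℂ) (hφ : ∑ j, ‖φ j‖ ^ 2 = 1) :
    C (Matrix.vecMulVec φ (star φ)) ≤ C (Matrix.vecMulVec ψ (star ψ)) := by
  have hd : d ≠ 0 := by rintro rfl; simp at hφ
  haveI : NeZero d := ⟨hd⟩
  have hdR : (0:ℝ) < d := by positivity
  have hdC : (d : ℂ) ≠ 0 := by exact_mod_cast hdR.ne'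
  have hsq : (Real.sqrt d : ℂ) * (Real.sqrt d : ℂ) = (d : ℂ) := by
    norm_cast; exact Real.mul_self_sqrt (le_of_lt hdR)
  have hsd0 : (Real.sqrt d : ℂ) ≠ 0 := by
    norm_cast; positivity
  have hψ0 : ∀ j, ψ j ≠ 0 := by
    intro j h
    have h2 := hψ2 j
    rw [h, norm_zero] at h2
    exact (by positivity : (0:ℝ) < 1 / Real.sqrt d).ne h2
  have hnψ : ∀ j, star (ψ j) * ψ j = ((d : ℂ))⁻¹ := by
    intro j
    rw [star_mul_self_eq_sq_abs, hψ2 j]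
    rw [div_pow, one_pow, Real.sq_sqrt (le_of_lt hdR)]
    push_cast
    rw [one_div]
  set s : ℂ := (Real.sqrt d : ℂ) with hs
  have hstars : star s = s := by rw [hs, Complex.star_def, Complex.conj_ofReal]
  have hy : ∀ j, star (s * ψ j) * (s * ψ j) = 1 := by
    intro j
    have h1 : star (s * ψ j) * (s * ψ j) = (s * s) * (star (ψ j) * ψ j) := by
      rw [star_mul', hstars]; ring
    rw [h1, hsq, hnψ, mul_inv_cancel₀ hdC]
  have key : ∀ (x : ℂ) (j : Fin d), star (x / (s * ψ j)) * (x / (s * ψ j))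
      = ((‖x‖ ^ 2 : ℝ) : ℂ) := by
    intro x j
    rw [star_div₀, div_mul_div_comm, hy, div_one, star_mul_self_eq_sq_abs]
  set K : Fin d → Matrix (Fin d) (Fin d) ℂ :=
    fun n => Matrix.of fun i k => if k = i + n then φ i / (s * ψ k) else 0 with hK
  -- completeness
  have hcomp : ∑ n, (K n)ᴴ * (K n) = 1 := by
    ext a b
    simp only [Matrix.sum_apply, Matrix.mul_apply, Matrix.conjTranspose_apply, hK,
      Matrix.of_apply]
    have h1 : ∀ n : Fin d,
        (∑ i, star (if a = i + n then φ i / (s * ψ a) else 0) *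
          (if b = i + n then φ i / (s * ψ b) else 0)) =
        (if b = a then ((‖φ (a - n)‖ ^ 2 : ℝ) : ℂ) else 0) := by
      intro n
      rw [Finset.sum_eq_single (a - n)]
      · have hc : a - n + n = a := sub_add_cancel a n
        by_cases hba : b = a
        · subst hba
          rw [if_pos hc.symm, if_pos rfl, key]
        · rw [if_pos hc.symm, if_neg (fun h => hba (h.trans hc)), mul_zero, if_neg hba]
      · intro i _ hi
        rw [if_neg, star_zero, zero_mul]
        intro h
        exact hi (eq_sub_of_add_eq h.symm)
      · intro h
        exact absurd (Finset.mem_univ _) h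
    rw [Finset.sum_congr rfl fun n _ => h1 n]
    by_cases hba : b = a
    · subst hba
      simp only [if_pos rfl, if_true, Matrix.one_apply_eq]
      rw [← Complex.ofReal_sum]
      have he : ∑ i, ‖φ (b - i)‖ ^ 2 = 1 := by
        rw [← hφ]
        exact Fintype.sum_equiv (Equiv.subLeft b) _ _ (fun n => rfl)
      rw [he, Complex.ofReal_one]
    · simp only [if_neg hba, Finset.sum_const_zero]
      rw [Matrix.one_apply_ne (fun h => hba h.symm)]
  have hincoh : IsIncoherentKraus K := by
    refine ⟨hcomp, ?_⟩
    intro D _ hD n i j hij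
    have hne : i + n ≠ j + n := fun h => hij (add_right_cancel h)
    have hD0 : D (i + n) (j + n) = 0 := hD hne
    simp [Matrix.mul_apply, Matrix.conjTranspose_apply, hK, ite_mul, zero_mul,
      mul_ite, mul_zero, apply_ite (star : ℂ → ℂ), star_zero, Finset.sum_ite_eq',
      hD0]
  have hsum : ∑ n, K n * Matrix.vecMulVec ψ (star ψ) * (K n)ᴴ
      = Matrix.vecMulVec φ (star φ) := by
    ext i j
    simp only [Matrix.sum_apply, Matrix.mul_apply, Matrix.conjTranspose_apply, hK,
      Matrix.of_apply, Matrix.vecMulVec_apply, Pi.star_apply, ite_mul, zero_mul,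
      mul_ite, mul_zero, apply_ite (star : ℂ → ℂ), star_zero, Finset.sum_ite_eq',
      Finset.mem_univ, if_true]
    have hterm : ∀ n : Fin d, φ i / (s * ψ (i + n)) * (ψ (i + n) * star (ψ (j + n)))
        * star (φ j / (s * ψ (j + n))) = φ i * star (φ j) * ((d:ℂ))⁻¹ := by
      intro n
      rw [star_div₀, star_mul', hstars]
      have h1 : ψ (i + n) ≠ 0 := hψ0 _
      have h2 : star (ψ (j + n)) ≠ 0 := star_ne_zero.mpr (hψ0 _)
      calc φ i / (s * ψ (i + n)) * (ψ (i + n) * star (ψ (j + n)))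
            * (star (φ j) / (s * star (ψ (j + n))))
          = (φ i * star (φ j)) * ((ψ (i + n) / (ψ (i + n) * s))
            * (star (ψ (j + n)) / (star (ψ (j + n)) * s))) := by ring
        _ = (φ i * star (φ j)) * (s⁻¹ * s⁻¹) := by
            rw [div_mul_cancel_left₀ h1, div_mul_cancel_left₀ h2]
        _ = φ i * star (φ j) * ((d:ℂ))⁻¹ := by rw [← mul_inv, hsq]
    rw [Finset.sum_congr rfl fun n _ => hterm n, Finset.sum_const, Finset.card_univ,
      Fintype.card_fin, nsmul_eq_mul]
    field_simp
  have hρdm : IsDensityMatrix (Matrix.vecMulVec ψ (star ψ)) := dm_vmv ψ hψ1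
  have h2 := hC.2.2.1 _ hρdm d K hincoh
  rwa [hsum] at h2

/-- every valid coherence measure is maximized by all states of S_MCS,
and it takes the same value on all of them. -/
theorem SMCS_maximizes_valid_measure
    {d : ℕ} (C : Matrix (Fin d) (Fin d) ℂ → ℝ) (hC : IsValidCoherenceMeasure C) :
    (∀ ρ, InSMCS ρ → ∀ σ, IsDensityMatrix σ → C σ ≤ C ρ) ∧
    (∀ ρ ρ', InSMCS ρ → InSMCS ρ' → C ρ = C ρ') := by
  have main : ∀ ρ, InSMCS ρ → ∀ σ, IsDensityMatrix σ → C σ ≤ C ρ := by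
    intro ρ hρ σ hσ
    obtain ⟨ψ, hψ1, hψ2, rfl⟩ := hρ
    have hH : σ.IsHermitian := hσ.1.1
    set U : Matrix (Fin d) (Fin d) ℂ :=
      (Matrix.IsHermitian.eigenvectorUnitary hH : Matrix (Fin d) (Fin d) ℂ) with hU
    have hUU : star U * U = 1 :=
      (Matrix.mem_unitaryGroup_iff').mp (Matrix.IsHermitian.eigenvectorUnitary hH).2
    set lam : Fin d → ℝ := hH.eigenvalues with hlam
    set v : Fin d → Fin d → ℂ := fun k i => U i k with hv
    have hvunit : ∀ k, ∑ i, ‖v k i‖ ^ 2 = 1 := by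
      intro k
      have h1 : ∑ i, star (U i k) * U i k = 1 := by
        have := congrFun (congrFun hUU k) k
        simpa [Matrix.mul_apply, Matrix.star_apply, Matrix.one_apply_eq] using this
      simp_rw [star_mul_self_eq_sq_abs] at h1
      rw [← Complex.ofReal_sum] at h1
      exact_mod_cast h1
    have hdecomp : σ = ∑ k, ((lam k : ℝ) : ℂ) • Matrix.vecMulVec (v k) (star (v k)) := by
      conv_lhs => rw [hH.spectral_theorem, Unitary.conjStarAlgAut_apply]
      ext i j
      simp only [Matrix.mul_apply, Matrix.sum_apply, Matrix.smul_apply,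
        Matrix.vecMulVec_apply, Matrix.diagonal_apply, Matrix.star_apply, Pi.star_apply,
        Function.comp_apply, smul_eq_mul, ite_mul, zero_mul, mul_ite, mul_zero,
        Finset.sum_ite_eq, Finset.sum_ite_eq', Finset.mem_univ, if_true, hv]
      apply Finset.sum_congr rfl
      intro x _
      simp only [RCLike.ofReal_alg, Complex.real_smul, mul_one, hlam]
      ring
    have hnn : ∀ k, 0 ≤ lam k := fun k => hσ.1.eigenvalues_nonneg k
    have hsum1 : ∑ k, lam k = 1 := by
      have ht : σ.trace = ∑ k, ((lam k : ℝ) : ℂ) := by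
        conv_lhs => rw [hH.spectral_theorem, Unitary.conjStarAlgAut_apply]
        rw [Matrix.trace_mul_cycle, hUU, one_mul, Matrix.trace_diagonal]
        simp [hlam]
      rw [hσ.2] at ht
      rw [← Complex.ofReal_sum] at ht
      exact_mod_cast ht.symm
    calc C σ = C (∑ k, ((lam k : ℝ) : ℂ) • Matrix.vecMulVec (v k) (star (v k))) := by
          rw [← hdecomp]
      _ ≤ ∑ k, lam k * C (Matrix.vecMulVec (v k) (star (v k))) :=
          hC.2.2.2.2 d lam _ hnn hsum1 (fun k => dm_vmv _ (hvunit k))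
      _ ≤ ∑ k, lam k * C (Matrix.vecMulVec ψ (star ψ)) :=
          Finset.sum_le_sum (fun k _ => mul_le_mul_of_nonneg_left
            (pure_le_MCS C hC ψ hψ1 hψ2 (v k) (hvunit k)) (hnn k))
      _ = C (Matrix.vecMulVec ψ (star ψ)) := by rw [← Finset.sum_mul, hsum1, one_mul]
  refine ⟨main, ?_⟩
  intro ρ ρ' h h'
  have d1 : IsDensityMatrix ρ := by obtain ⟨ψ, h1, h2, rfl⟩ := h; exact dm_vmv ψ h1
  have d2 : IsDensityMatrix ρ' := by obtain ⟨ψ, h1, h2, rfl⟩ := h'; exact dm_vmv ψ h1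
  exact le_antisymm (main ρ' h' ρ d1) (main ρ h ρ' d2)
end
end

section
/- Let d ≥ 1 and let ρ be a density matrix on ℂ^d. Then ρ attains the maximum value of every valid coherence measure (i.e., for every valid coherence measure C and every density matrix σ on ℂ^d, C(σ) ≤ C(ρ)) if and only if ρ belongs to S_MCS. In other words, S_MCS is exactly the intersection over all valid coherence measures C of the set of maximizers of C. -/
open Matrix BigOperators
open scoped ComplexOrder

noncomputable section

namespace SMCS

open Finset

variable {d N : ℕ}

/-- l1 norm of coherence -/
def Cl1 (τ : Matrix (Fin d) (Fin d) ℂ) : ℝ :=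
  ∑ i, ∑ j, if i = j then 0 else ‖τ i j‖

lemma Cl1_nonneg (τ : Matrix (Fin d) (Fin d) ℂ) : 0 ≤ Cl1 τ :=
  Finset.sum_nonneg fun i _ => Finset.sum_nonneg fun j _ => by
    split
    · exact le_rfl
    · exact norm_nonneg _

lemma sum4_swap {M : Type*} [AddCommMonoid M] (F : Fin d → Fin d → Fin d → Fin d → M) :
    ∑ i, ∑ j, ∑ a, ∑ b, F i j a b = ∑ a, ∑ b, ∑ i, ∑ j, F i j a b := by
  have h1 : ∑ i, ∑ j, ∑ a, ∑ b, F i j a b = ∑ i, ∑ a, ∑ j, ∑ b, F i j a b :=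
    Finset.sum_congr rfl fun i _ => Finset.sum_comm
  have h2 : ∑ i, ∑ a, ∑ j, ∑ b, F i j a b = ∑ a, ∑ i, ∑ j, ∑ b, F i j a b :=
    Finset.sum_comm
  have h3 : ∑ a, ∑ i, ∑ j, ∑ b, F i j a b = ∑ a, ∑ i, ∑ b, ∑ j, F i j a b :=
    Finset.sum_congr rfl fun a _ => Finset.sum_congr rfl fun i _ => Finset.sum_comm
  have h4 : ∑ a, ∑ i, ∑ b, ∑ j, F i j a b = ∑ a, ∑ b, ∑ i, ∑ j, F i j a b :=
    Finset.sum_congr rfl fun a _ => Finset.sum_comm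
  rw [h1, h2, h3, h4]

lemma col_orth {K : Fin N → Matrix (Fin d) (Fin d) ℂ} (hK : IsIncoherentKraus K)
    (n : Fin N) (a : Fin d) {i j : Fin d} (hij : i ≠ j) :
    K n i a * (starRingEnd ℂ) (K n j a) = 0 := by
  classical
  have hDdm : IsDensityMatrix (Matrix.diagonal (fun k => if k = a then (1:ℂ) else 0)) := by
    constructor
    · refine Matrix.posSemidef_diagonal_iff.2 ?_
      intro k; split
      · exact zero_le_one
      · exact le_rfl
    · simp [Matrix.trace_diagonal]
  have h := hK.2 _ hDdm (Matrix.isDiag_diagonal _) n hij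
  have hent : (K n * Matrix.diagonal (fun k => if k = a then (1:ℂ) else 0) * (K n)ᴴ) i j
      = K n i a * (starRingEnd ℂ) (K n j a) := by
    rw [Matrix.mul_apply]
    simp [Matrix.mul_diagonal, Matrix.conjTranspose_apply, mul_ite, ite_mul,
      mul_zero, zero_mul, mul_one, Finset.sum_ite_eq', Complex.star_def]
  have h2 : (K n * Matrix.diagonal (fun k => if k = a then (1:ℂ) else 0) * (K n)ᴴ) i j = 0 := h
  rw [hent] at h2
  exact h2

lemma col_orth_abs {K : Fin N → Matrix (Fin d) (Fin d) ℂ} (hK : IsIncoherentKraus K)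
    (n : Fin N) (a : Fin d) {i j : Fin d} (hij : i ≠ j) :
    ‖K n i a‖ * ‖K n j a‖ = 0 := by
  have h := congrArg (‖·‖) (col_orth hK n a hij)
  simpa [_root_.map_mul, Complex.norm_conj] using h

lemma s_sq {K : Fin N → Matrix (Fin d) (Fin d) ℂ} (hK : IsIncoherentKraus K) (n : Fin N)
    (a : Fin d) :
    (∑ i, ‖K n i a‖)^2 = ∑ i, ‖K n i a‖^2 := by
  rw [sq, Finset.sum_mul_sum]
  refine Finset.sum_congr rfl fun i _ => ?_
  rw [Finset.sum_eq_single i]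
  · exact (sq _).symm
  · intro j _ hji
    exact col_orth_abs hK n a (Ne.symm hji)
  · intro h; exact absurd (Finset.mem_univ i) h

lemma conj_mul_re (z : ℂ) : ((starRingEnd ℂ) z * z).re = ‖z‖ ^ 2 := by
  rw [← Complex.normSq_eq_conj_mul_self, Complex.ofReal_re, Complex.normSq_eq_norm_sq]

lemma s_sq_sum {K : Fin N → Matrix (Fin d) (Fin d) ℂ} (hK : IsIncoherentKraus K) (a : Fin d) :
    ∑ n, (∑ i, ‖K n i a‖)^2 = 1 := by
  calc ∑ n, (∑ i, ‖K n i a‖)^2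
      = ∑ n, ∑ i, ‖K n i a‖^2 := Finset.sum_congr rfl fun n _ => s_sq hK n a
    _ = ∑ n, ∑ i, ((starRingEnd ℂ) (K n i a) * K n i a).re :=
        Finset.sum_congr rfl fun n _ => Finset.sum_congr rfl fun i _ => (conj_mul_re _).symm
    _ = ((∑ n, (K n)ᴴ * K n : Matrix (Fin d) (Fin d) ℂ) a a).re := by
        simp [Matrix.sum_apply, Matrix.mul_apply, Matrix.conjTranspose_apply, Complex.re_sum]
    _ = 1 := by rw [hK.1]; simp [Matrix.one_apply]

lemma sab_le {K : Fin N → Matrix (Fin d) (Fin d) ℂ} (hK : IsIncoherentKraus K) (a b : Fin d) :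
    ∑ n, (∑ i, ‖K n i a‖) * (∑ i, ‖K n i b‖) ≤ 1 := by
  have h := Finset.sum_mul_sq_le_sq_mul_sq Finset.univ
    (fun n => ∑ i, ‖K n i a‖) (fun n => ∑ i, ‖K n i b‖)
  rw [s_sq_sum hK a, s_sq_sum hK b] at h
  have hnn : (0:ℝ) ≤ ∑ n, (∑ i, ‖K n i a‖) * (∑ i, ‖K n i b‖) :=
    Finset.sum_nonneg fun n _ => mul_nonneg (Finset.sum_nonneg fun i _ => norm_nonneg _)
      (Finset.sum_nonneg fun i _ => norm_nonneg _)
  nlinarith [h, hnn]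

lemma entry_eq (K ρ : Matrix (Fin d) (Fin d) ℂ) (i j : Fin d) :
    (K * ρ * Kᴴ) i j = ∑ a, ∑ b, K i a * ρ a b * (starRingEnd ℂ) (K j b) := by
  simp only [Matrix.mul_apply, Matrix.conjTranspose_apply, Finset.sum_mul, Complex.star_def]
  rw [Finset.sum_comm]

lemma key_mono {K : Fin N → Matrix (Fin d) (Fin d) ℂ} (hK : IsIncoherentKraus K)
    (ρ : Matrix (Fin d) (Fin d) ℂ) :
    ∑ n, Cl1 (K n * ρ * (K n)ᴴ) ≤ Cl1 ρ := by
  classical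
  set f : Fin N → Fin d → Fin d → ℝ := fun n i a => ‖K n i a‖ with hf
  set g : Fin d → Fin d → ℝ := fun a b => ‖ρ a b‖ with hg
  have hitenn : ∀ (n : Fin N) (i j a b : Fin d),
      (0:ℝ) ≤ (if a = b then 0 else f n i a * g a b * f n j b) := by
    intro n i j a b; split
    · exact le_rfl
    · positivity
  have step1 : ∀ (n : Fin N) (i j : Fin d), i ≠ j →
      ‖(K n * ρ * (K n)ᴴ) i j‖
        ≤ ∑ a, ∑ b, (if a = b then 0 else f n i a * g a b * f n j b) := by
    intro n i j hij
    rw [entry_eq]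
    calc ‖∑ a, ∑ b, K n i a * ρ a b * (starRingEnd ℂ) (K n j b)‖
        ≤ ∑ a, ‖∑ b, K n i a * ρ a b * (starRingEnd ℂ) (K n j b)‖ :=
          norm_sum_le _ _
      _ ≤ ∑ a, ∑ b, ‖K n i a * ρ a b * (starRingEnd ℂ) (K n j b)‖ :=
          Finset.sum_le_sum fun a _ => norm_sum_le _ _
      _ = ∑ a, ∑ b, (if a = b then 0 else f n i a * g a b * f n j b) := by
          refine Finset.sum_congr rfl fun a _ => Finset.sum_congr rfl fun b _ => ?_
          by_cases hab : a = b
          · subst hab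
            have h0 : K n i a * ρ a a * (starRingEnd ℂ) (K n j a) = 0 := by
              have hco := col_orth hK n a hij
              calc K n i a * ρ a a * (starRingEnd ℂ) (K n j a)
                  = (K n i a * (starRingEnd ℂ) (K n j a)) * ρ a a := by ring
                _ = 0 := by rw [hco, zero_mul]
            simp [h0]
          · simp [hab, _root_.map_mul, Complex.norm_conj, hf, hg]
  calc ∑ n, Cl1 (K n * ρ * (K n)ᴴ)
      ≤ ∑ n, ∑ i, ∑ j, ∑ a, ∑ b, (if a = b then 0 else f n i a * g a b * f n j b) := by
        refine Finset.sum_le_sum fun n _ => Finset.sum_le_sum fun i _ =>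
          Finset.sum_le_sum fun j _ => ?_
        by_cases hij : i = j
        · simp only [hij, if_pos rfl]
          exact Finset.sum_nonneg fun a _ => Finset.sum_nonneg fun b _ => hitenn n j j a b
        · simpa [hij] using step1 n i j hij
    _ = ∑ n, ∑ a, ∑ b, (if a = b then 0 else g a b * ((∑ i, f n i a) * (∑ j, f n j b))) := by
        refine Finset.sum_congr rfl fun n _ => ?_
        rw [sum4_swap]
        refine Finset.sum_congr rfl fun a _ => Finset.sum_congr rfl fun b _ => ?_
        by_cases hab : a = b
        · simp [hab]
        · simp only [hab, if_false]
          rw [Finset.sum_mul_sum, Finset.mul_sum]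
          refine Finset.sum_congr rfl fun i _ => ?_
          rw [Finset.mul_sum]
          refine Finset.sum_congr rfl fun j _ => by ring
    _ = ∑ a, ∑ b, (if a = b then 0 else g a b * ∑ n, (∑ i, f n i a) * (∑ j, f n j b)) := by
        rw [Finset.sum_comm]
        refine Finset.sum_congr rfl fun a _ => ?_
        rw [Finset.sum_comm]
        refine Finset.sum_congr rfl fun b _ => ?_
        by_cases hab : a = b
        · simp [hab]
        · simp only [hab, if_false, ← Finset.mul_sum]
    _ ≤ ∑ a, ∑ b, (if a = b then 0 else g a b * 1) := by
        refine Finset.sum_le_sum fun a _ => Finset.sum_le_sum fun b _ => ?_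
        by_cases hab : a = b
        · simp [hab]
        · simp only [hab, if_false]
          exact mul_le_mul_of_nonneg_left (sab_le hK a b) (norm_nonneg _)
    _ = Cl1 ρ := by
        unfold Cl1
        refine Finset.sum_congr rfl fun a _ => Finset.sum_congr rfl fun b _ => ?_
        by_cases hab : a = b <;> simp [hab, hg]

end SMCS
namespace SMCS

variable {d : ℕ}

lemma Cl1_sum_le {N : ℕ} (M : Fin N → Matrix (Fin d) (Fin d) ℂ) :
    Cl1 (∑ n, M n) ≤ ∑ n, Cl1 (M n) := by
  unfold Cl1
  calc ∑ i, ∑ j, (if i = j then 0 else ‖(∑ n, M n) i j‖)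
      ≤ ∑ i, ∑ j, ∑ n, (if i = j then 0 else ‖M n i j‖) := by
        refine Finset.sum_le_sum fun i _ => Finset.sum_le_sum fun j _ => ?_
        by_cases hij : i = j
        · simp [hij]
        · simp only [hij, if_false, Matrix.sum_apply]
          exact norm_sum_le _ _
    _ = ∑ i, ∑ n, ∑ j, (if i = j then 0 else ‖M n i j‖) :=
        Finset.sum_congr rfl fun i _ => Finset.sum_comm
    _ = ∑ n, ∑ i, ∑ j, (if i = j then 0 else ‖M n i j‖) := Finset.sum_comm

lemma Cl1_smul_nonneg (c : ℝ) (hc : 0 ≤ c) (τ : Matrix (Fin d) (Fin d) ℂ) :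
    Cl1 (((c:ℂ)) • τ) = c * Cl1 τ := by
  unfold Cl1
  rw [Finset.mul_sum]
  refine Finset.sum_congr rfl fun i _ => ?_
  rw [Finset.mul_sum]
  refine Finset.sum_congr rfl fun j _ => ?_
  by_cases hij : i = j
  · simp [hij]
  · simp only [hij, if_false, Matrix.smul_apply, smul_eq_mul, norm_mul,
      Complex.norm_real, Real.norm_eq_abs, abs_of_nonneg hc]

lemma Cl1_valid : IsValidCoherenceMeasure (Cl1 (d := d)) := by
  refine ⟨fun ρ _ => Cl1_nonneg ρ, ?_, ?_, ?_, ?_⟩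
  · -- C1
    intro ρ _
    constructor
    · intro h0
      intro i j hij
      have h1 := (Finset.sum_eq_zero_iff_of_nonneg
        (fun i _ => Finset.sum_nonneg fun j _ => by
          split
          · exact le_rfl
          · exact norm_nonneg _)).mp h0 i (Finset.mem_univ i)
      have h2 := (Finset.sum_eq_zero_iff_of_nonneg
        (fun j _ => by
          split
          · exact le_rfl
          · exact norm_nonneg _)).mp h1 j (Finset.mem_univ j)
      rw [if_neg hij] at h2
      exact norm_eq_zero.mp h2
    · intro hdiag
      refine Finset.sum_eq_zero fun i _ => Finset.sum_eq_zero fun j _ => ?_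
      by_cases hij : i = j
      · simp [hij]
      · simp [hij, hdiag hij]
  · -- C2
    intro ρ hρ N K hK
    calc Cl1 (∑ n, K n * ρ * (K n)ᴴ) ≤ ∑ n, Cl1 (K n * ρ * (K n)ᴴ) := Cl1_sum_le _
      _ ≤ Cl1 ρ := key_mono hK ρ
  · -- C3
    intro ρ hρ N K hK
    calc ∑ n ∈ Finset.univ.filter
          (fun n => 0 < (Matrix.trace (K n * ρ * (K n)ᴴ)).re),
        (Matrix.trace (K n * ρ * (K n)ᴴ)).re *
          Cl1 ((((Matrix.trace (K n * ρ * (K n)ᴴ)).re : ℂ))⁻¹ • (K n * ρ * (K n)ᴴ))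
        = ∑ n ∈ Finset.univ.filter
            (fun n => 0 < (Matrix.trace (K n * ρ * (K n)ᴴ)).re), Cl1 (K n * ρ * (K n)ᴴ) := by
          refine Finset.sum_congr rfl fun n hn => ?_
          have hp : 0 < (Matrix.trace (K n * ρ * (K n)ᴴ)).re := (Finset.mem_filter.mp hn).2
          rw [← Complex.ofReal_inv, Cl1_smul_nonneg _ (inv_nonneg.mpr hp.le), ← mul_assoc,
            mul_inv_cancel₀ hp.ne', one_mul]
      _ ≤ ∑ n, Cl1 (K n * ρ * (K n)ᴴ) :=
          Finset.sum_le_sum_of_subset_of_nonneg (Finset.filter_subset _ _)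
            (fun n _ _ => Cl1_nonneg _)
      _ ≤ Cl1 ρ := key_mono hK ρ
  · -- C4
    intro M q ρs hq _ _
    calc Cl1 (∑ k, (q k : ℂ) • ρs k) ≤ ∑ k, Cl1 ((q k : ℂ) • ρs k) := Cl1_sum_le _
      _ = ∑ k, q k * Cl1 (ρs k) :=
          Finset.sum_congr rfl fun k _ => Cl1_smul_nonneg _ (hq k) _

end SMCS
namespace SMCS

variable {d : ℕ}

lemma MCS_to_any (hd : 1 ≤ d) (ψ : Fin d → ℂ)
    (habs : ∀ j, ‖ψ j‖ = 1 / Real.sqrt d)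
    (σ : Matrix (Fin d) (Fin d) ℂ) (hσ : IsDensityMatrix σ) :
    ∃ K : Fin (d*d) → Matrix (Fin d) (Fin d) ℂ, IsIncoherentKraus K ∧
      ∑ t, K t * (Matrix.vecMulVec ψ (star ψ)) * (K t)ᴴ = σ := by
  classical
  haveI : NeZero d := ⟨by omega⟩
  have hdR : (0:ℝ) < (d:ℝ) := by exact_mod_cast Nat.lt_of_lt_of_le Nat.zero_lt_one hd
  have hns : ∀ k, Complex.normSq (ψ k) = (d:ℝ)⁻¹ := by
    intro k
    rw [Complex.normSq_eq_norm_sq, habs k, div_pow, one_pow, Real.sq_sqrt hdR.le, one_div]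
  have hsq : ((Real.sqrt d : ℝ) : ℂ) * ((Real.sqrt d : ℝ) : ℂ) = ((d:ℝ) : ℂ) := by
    rw [← Complex.ofReal_mul, Real.mul_self_sqrt hdR.le]
  have hdinv : ((d:ℝ) : ℂ) * (((d:ℝ)⁻¹ : ℝ) : ℂ) = 1 := by
    rw [← Complex.ofReal_mul, mul_inv_cancel₀ hdR.ne']
    exact Complex.ofReal_one
  obtain ⟨A, hA⟩ : ∃ B : Matrix (Fin d) (Fin d) ℂ, σ = Bᴴ * B := by
    open scoped MatrixOrder Matrix.Norms.L2Operator in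
    exact CStarAlgebra.nonneg_iff_eq_star_mul_self.mp hσ.1.nonneg
  set Kf : Fin d × Fin d → Matrix (Fin d) (Fin d) ℂ := fun p =>
    Matrix.of fun j k => if j = k - p.2
      then ((Real.sqrt d : ℝ) : ℂ) * (starRingEnd ℂ) (A p.1 j) * (starRingEnd ℂ) (ψ k)
      else 0 with hKf
  set KK : Fin (d*d) → Matrix (Fin d) (Fin d) ℂ := fun t => Kf (finProdFinEquiv.symm t) with hKK
  refine ⟨KK, ⟨?_, ?_⟩, ?_⟩
  · -- completeness
    have hent : ∀ (m n : Fin d) (k k' : Fin d), ((Kf (m,n))ᴴ * Kf (m,n)) k k'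
        = if k = k' then (Complex.normSq (A m (k - n)) : ℂ) else 0 := by
      intro m n k k'
      rw [Matrix.mul_apply]
      rw [Finset.sum_eq_single (k - n)]
      · simp only [Matrix.conjTranspose_apply, hKf, Matrix.of_apply, if_pos rfl, Complex.star_def]
        by_cases hkk : k = k'
        · subst hkk
          rw [if_pos rfl]
          calc (starRingEnd ℂ) (((Real.sqrt d : ℝ) : ℂ) * (starRingEnd ℂ) (A m (k-n)) * (starRingEnd ℂ) (ψ k))
              * (((Real.sqrt d : ℝ) : ℂ) * (starRingEnd ℂ) (A m (k-n)) * (starRingEnd ℂ) (ψ k))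
              = (((Real.sqrt d : ℝ) : ℂ) * ((Real.sqrt d : ℝ) : ℂ))
                * (A m (k-n) * (starRingEnd ℂ) (A m (k-n)))
                * (ψ k * (starRingEnd ℂ) (ψ k)) := by
                simp only [_root_.map_mul, Complex.conj_conj, Complex.conj_ofReal]
                ring
            _ = if k = k then (Complex.normSq (A m (k - n)) : ℂ) else 0 := by
                rw [if_pos rfl, Complex.mul_conj, Complex.mul_conj, hsq, hns]
                calc ((d:ℝ) : ℂ) * (Complex.normSq (A m (k-n)) : ℂ) * (((d:ℝ)⁻¹ : ℝ) : ℂ)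
                    = (((d:ℝ) : ℂ) * (((d:ℝ)⁻¹ : ℝ) : ℂ)) * (Complex.normSq (A m (k-n)) : ℂ) := by
                      ring
                  _ = (Complex.normSq (A m (k-n)) : ℂ) := by rw [hdinv, one_mul]
        · have hne : ¬ (k - n = k' - n) := fun h => hkk (sub_left_inj.mp h)
          rw [if_neg hne, mul_zero, if_neg hkk]
      · intro j _ hj
        simp only [Matrix.conjTranspose_apply, hKf, Matrix.of_apply, if_neg hj, star_zero,
          zero_mul]
      · intro h; exact absurd (Finset.mem_univ _) h
    ext k k'
    rw [Matrix.sum_apply]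
    rw [show (∑ t : Fin (d*d), ((KK t)ᴴ * KK t) k k')
        = ∑ p : Fin d × Fin d, ((Kf p)ᴴ * Kf p) k k' from
      Equiv.sum_comp finProdFinEquiv.symm (fun p => ((Kf p)ᴴ * Kf p) k k')]
    rw [Fintype.sum_prod_type]
    simp only [hent]
    by_cases hkk : k = k'
    · subst hkk
      simp only [eq_self_iff_true, if_true, Matrix.one_apply_eq]
      have hre : (∑ m : Fin d, ∑ n : Fin d, (Complex.normSq (A m (k - n)) : ℂ))
          = ∑ m : Fin d, ∑ j : Fin d, (Complex.normSq (A m j) : ℂ) :=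
        Finset.sum_congr rfl fun m _ =>
          Fintype.sum_equiv (Equiv.subLeft k) _ _ (fun n => rfl)
      rw [hre, Finset.sum_comm]
      calc ∑ j : Fin d, ∑ m : Fin d, (Complex.normSq (A m j) : ℂ)
          = ∑ j : Fin d, ∑ m : Fin d, (starRingEnd ℂ) (A m j) * (A m j) := by
            refine Finset.sum_congr rfl fun j _ => Finset.sum_congr rfl fun m _ => ?_
            rw [mul_comm, Complex.mul_conj]
        _ = Matrix.trace σ := by
            rw [hA]
            simp [Matrix.trace, Matrix.diag, Matrix.mul_apply, Matrix.conjTranspose_apply,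
              Complex.star_def]
        _ = 1 := hσ.2
    · simp [hkk, Matrix.one_apply_ne hkk]
  · -- incoherent
    intro D _ hDdiag t
    intro i j hij
    rw [hKK, entry_eq]
    refine Finset.sum_eq_zero fun a _ => Finset.sum_eq_zero fun b _ => ?_
    by_cases ha : i = a - (finProdFinEquiv.symm t).2
    · by_cases hb : j = b - (finProdFinEquiv.symm t).2
      · have hab : a ≠ b := by
          intro h; exact hij (by rw [ha, hb, h])
        rw [hDdiag hab, mul_zero, zero_mul]
      · have h0 : Kf (finProdFinEquiv.symm t) j b = 0 := by
          simp only [hKf, Matrix.of_apply, if_neg hb]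
        simp only [h0, map_zero, mul_zero]
    · have h0 : Kf (finProdFinEquiv.symm t) i a = 0 := by
        simp only [hKf, Matrix.of_apply, if_neg ha]
      simp only [h0, zero_mul]

  · -- maps the MCS to σ
    ext i j
    rw [Matrix.sum_apply]
    rw [show (∑ t : Fin (d*d),
          (KK t * Matrix.vecMulVec ψ (star ψ) * (KK t)ᴴ) i j)
        = ∑ p : Fin d × Fin d, (Kf p * Matrix.vecMulVec ψ (star ψ) * (Kf p)ᴴ) i j from
      Equiv.sum_comp finProdFinEquiv.symm
        (fun p => (Kf p * Matrix.vecMulVec ψ (star ψ) * (Kf p)ᴴ) i j)]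
    rw [Fintype.sum_prod_type]
    have hent2 : ∀ (m n : Fin d), (Kf (m,n) * Matrix.vecMulVec ψ (star ψ) * (Kf (m,n))ᴴ) i j
        = (starRingEnd ℂ) (A m i) * A m j * (((d:ℝ)⁻¹ : ℝ) : ℂ) := by
      intro m n
      rw [entry_eq]
      have hcol : ∀ (r a : Fin d), Kf (m,n) r a
          = if r + n = a
            then ((Real.sqrt d : ℝ) : ℂ) * (starRingEnd ℂ) (A m r) * (starRingEnd ℂ) (ψ a)
            else 0 := by
        intro r a
        simp only [hKf, Matrix.of_apply, eq_sub_iff_add_eq]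
      calc ∑ a, ∑ b, Kf (m,n) i a * (Matrix.vecMulVec ψ (star ψ)) a b
              * (starRingEnd ℂ) (Kf (m,n) j b)
          = (((Real.sqrt d : ℝ) : ℂ) * (starRingEnd ℂ) (A m i) * (starRingEnd ℂ) (ψ (i+n)))
            * (ψ (i+n) * (starRingEnd ℂ) (ψ (j+n)))
            * (starRingEnd ℂ) (((Real.sqrt d : ℝ) : ℂ) * (starRingEnd ℂ) (A m j)
                * (starRingEnd ℂ) (ψ (j+n))) := by
            simp only [hcol, Matrix.vecMulVec_apply, Pi.star_apply, Complex.star_def,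
              apply_ite (starRingEnd ℂ), map_zero, ite_mul, zero_mul, mul_ite, mul_zero]
            simp only [Finset.sum_ite_eq, Finset.mem_univ, if_true]
          _ = (((Real.sqrt d : ℝ) : ℂ) * ((Real.sqrt d : ℝ) : ℂ))
              * ((starRingEnd ℂ) (A m i) * A m j)
              * ((ψ (i+n) * (starRingEnd ℂ) (ψ (i+n))) * (ψ (j+n) * (starRingEnd ℂ) (ψ (j+n)))) := by
            simp only [_root_.map_mul, Complex.conj_conj, Complex.conj_ofReal]
            ring
          _ = (starRingEnd ℂ) (A m i) * A m j * (((d:ℝ)⁻¹ : ℝ) : ℂ) := by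
            rw [Complex.mul_conj, Complex.mul_conj, hsq, hns, hns]
            calc ((d:ℝ) : ℂ) * ((starRingEnd ℂ) (A m i) * A m j)
                  * ((((d:ℝ)⁻¹ : ℝ) : ℂ) * (((d:ℝ)⁻¹ : ℝ) : ℂ))
                = (((d:ℝ) : ℂ) * (((d:ℝ)⁻¹ : ℝ) : ℂ))
                  * ((starRingEnd ℂ) (A m i) * A m j * (((d:ℝ)⁻¹ : ℝ) : ℂ)) := by ring
              _ = (starRingEnd ℂ) (A m i) * A m j * (((d:ℝ)⁻¹ : ℝ) : ℂ) := by
                rw [hdinv, one_mul]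
    rw [Finset.sum_congr rfl fun m _ => Finset.sum_congr rfl fun n _ => hent2 m n]
    rw [Finset.sum_congr rfl fun m _ =>
      (Finset.sum_const ((starRingEnd ℂ) (A m i) * A m j * (((d:ℝ)⁻¹ : ℝ) : ℂ)))]
    simp only [Finset.card_univ, Fintype.card_fin, nsmul_eq_mul]
    have hd2 : ∀ m : Fin d, ((d:ℕ):ℂ) * ((starRingEnd ℂ) (A m i) * A m j * (((d:ℝ)⁻¹ : ℝ) : ℂ))
        = (starRingEnd ℂ) (A m i) * A m j := by
      intro m
      have hc : ((d:ℕ):ℂ) = ((d:ℝ):ℂ) := by push_cast; ring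
      rw [hc, show ((d:ℝ):ℂ) * ((starRingEnd ℂ) (A m i) * A m j * (((d:ℝ)⁻¹ : ℝ) : ℂ))
          = (((d:ℝ):ℂ) * (((d:ℝ)⁻¹ : ℝ) : ℂ)) * ((starRingEnd ℂ) (A m i) * A m j) from by ring,
        hdinv, one_mul]
    rw [Finset.sum_congr rfl fun m _ => hd2 m]
    rw [hA]
    simp [Matrix.mul_apply, Matrix.conjTranspose_apply, Complex.star_def]

end SMCS
namespace SMCS

variable {d : ℕ}

lemma sum_ite_ne (i : Fin d) (X : Fin d → ℝ) :
    ∑ j, (if i = j then 0 else X j) = (∑ j, X j) - X i := by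
  have h : ∀ j, (if i = j then (0:ℝ) else X j) = X j - (if i = j then X j else 0) := by
    intro j; by_cases h : i = j <;> simp [h]
  rw [Finset.sum_congr rfl fun j _ => h j, Finset.sum_sub_distrib, Finset.sum_ite_eq,
    if_pos (Finset.mem_univ i)]

lemma density_vecMulVec (ψ : Fin d → ℂ) (h : ∑ j, ‖ψ j‖ ^ 2 = 1) :
    IsDensityMatrix (Matrix.vecMulVec ψ (star ψ)) := by
  constructor
  · have hA : Matrix.vecMulVec ψ (star ψ)
        = (Matrix.of fun (_ : Fin 1) j => (starRingEnd ℂ) (ψ j))ᴴ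
          * (Matrix.of fun (_ : Fin 1) j => (starRingEnd ℂ) (ψ j)) := by
      ext i j
      simp [Matrix.mul_apply, Matrix.vecMulVec_apply, Matrix.conjTranspose_apply, Pi.star_apply,
        Complex.star_def, Fin.sum_univ_one]
    rw [hA]
    exact Matrix.posSemidef_conjTranspose_mul_self _
  · have h1 : Matrix.trace (Matrix.vecMulVec ψ (star ψ)) = ∑ i, ψ i * (starRingEnd ℂ) (ψ i) := by
      simp [Matrix.trace, Matrix.diag, Matrix.vecMulVec_apply, Pi.star_apply, Complex.star_def]
    rw [h1]
    rw [Finset.sum_congr rfl fun i _ => Complex.mul_conj (ψ i)]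
    rw [show (∑ i, ((Complex.normSq (ψ i) : ℝ) : ℂ)) = ((∑ i, Complex.normSq (ψ i) : ℝ) : ℂ) from
      by push_cast; rfl]
    rw [show ∑ i, Complex.normSq (ψ i) = 1 from by
      rw [← h]; exact Finset.sum_congr rfl fun i _ => Complex.normSq_eq_norm_sq (ψ i)]
    exact Complex.ofReal_one

end SMCS

open SMCS in
/-- the common maximizers of all valid coherence measures are exactly
the states of S_MCS. -/
theorem common_maximizers_eq_SMCS
    {d : ℕ} (hd : 1 ≤ d) (ρ : Matrix (Fin d) (Fin d) ℂ) (hρ : IsDensityMatrix ρ) :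
    (∀ C : Matrix (Fin d) (Fin d) ℂ → ℝ, IsValidCoherenceMeasure C →
      ∀ σ, IsDensityMatrix σ → C σ ≤ C ρ) ↔ InSMCS ρ := by
  classical
  have hdR : (0:ℝ) < (d:ℝ) := by exact_mod_cast Nat.lt_of_lt_of_le Nat.zero_lt_one hd
  constructor
  · -- forward direction
    intro h
    -- the reference maximally coherent state
    set ψ0 : Fin d → ℂ := fun _ => (((Real.sqrt d)⁻¹ : ℝ) : ℂ) with hψ0
    have hvsq : ((Real.sqrt d)⁻¹ : ℝ)^2 = (d:ℝ)⁻¹ := by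
      rw [inv_pow, Real.sq_sqrt hdR.le]
    have hψ0sum : ∑ j, ‖ψ0 j‖^2 = 1 := by
      have : ∀ j : Fin d, ‖ψ0 j‖^2 = (d:ℝ)⁻¹ := by
        intro j
        rw [hψ0]
        simp only [Complex.norm_real, Real.norm_eq_abs, abs_of_nonneg (inv_nonneg.mpr (Real.sqrt_nonneg _)), sq_abs]
        exact hvsq
      rw [Finset.sum_congr rfl fun j _ => this j, Finset.sum_const, Finset.card_univ,
        Fintype.card_fin, nsmul_eq_mul, mul_inv_cancel₀ hdR.ne']
    have hσ0 := density_vecMulVec ψ0 hψ0sum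
    have hCl1σ0 : Cl1 (Matrix.vecMulVec ψ0 (star ψ0)) = (d:ℝ) - 1 := by
      have hc : ∀ i j : Fin d, ‖(Matrix.vecMulVec ψ0 (star ψ0)) i j‖ = (d:ℝ)⁻¹ := by
        intro i j
        rw [hψ0]
        simp only [Matrix.vecMulVec_apply, Pi.star_apply, Complex.star_def, Complex.conj_ofReal,
          norm_mul, Complex.norm_real, Real.norm_eq_abs, abs_of_nonneg (inv_nonneg.mpr (Real.sqrt_nonneg _))]
        rw [← mul_inv, Real.mul_self_sqrt hdR.le]
      unfold Cl1
      have hrow : ∀ i : Fin d,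
          ∑ j, (if i = j then (0:ℝ) else ‖(Matrix.vecMulVec ψ0 (star ψ0)) i j‖)
          = 1 - (d:ℝ)⁻¹ := by
        intro i
        rw [show (∑ j, if i = j then (0:ℝ)
              else ‖(Matrix.vecMulVec ψ0 (star ψ0)) i j‖)
            = ∑ j, (if i = j then (0:ℝ) else (d:ℝ)⁻¹) from Finset.sum_congr rfl fun j _ => by
          by_cases hij : i = j <;> simp [hij, hc i j]]
        rw [sum_ite_ne i (fun _ => (d:ℝ)⁻¹), Finset.sum_const, Finset.card_univ,
          Fintype.card_fin, nsmul_eq_mul, mul_inv_cancel₀ hdR.ne']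
      rw [Finset.sum_congr rfl fun i _ => hrow i, Finset.sum_const, Finset.card_univ,
        Fintype.card_fin, nsmul_eq_mul, mul_sub, mul_one, mul_inv_cancel₀ hdR.ne']
    have hge : (d:ℝ) - 1 ≤ Cl1 ρ := by
      have := h Cl1 Cl1_valid _ hσ0
      rwa [hCl1σ0] at this
    -- Gram vector representation of ρ
    obtain ⟨B, hB⟩ : ∃ B : Matrix (Fin d) (Fin d) ℂ, ρ = Bᴴ * B := by
      open scoped MatrixOrder Matrix.Norms.L2Operator in
      exact CStarAlgebra.nonneg_iff_eq_star_mul_self.mp hρ.1.nonneg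
    set b : Fin d → EuclideanSpace ℂ (Fin d) :=
      fun i => (WithLp.equiv 2 (Fin d → ℂ)).symm (fun k => B k i) with hb
    have hGram : ∀ i j, ρ i j = (inner ℂ (b i) (b j) : ℂ) := by
      intro i j
      rw [hB]
      simp [Matrix.mul_apply, Matrix.conjTranspose_apply, PiLp.inner_apply, RCLike.inner_apply,
        WithLp.equiv_symm_apply, PiLp.toLp_apply, Complex.star_def, hb, mul_comm]
    set a : Fin d → ℝ := fun i => ‖b i‖ with ha
    have ha2 : ∀ i, a i ^ 2 = (ρ i i).re := by
      intro i
      show ‖b i‖ ^ 2 = (ρ i i).re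
      rw [InnerProductSpace.norm_sq_eq_re_inner (𝕜 := ℂ), hGram i i]
      simp [RCLike.re_to_complex]
    have htr : ∑ i, a i ^ 2 = 1 := by
      have h2 : (Matrix.trace ρ).re = 1 := by rw [hρ.2]; simp
      rw [Matrix.trace] at h2
      rw [Complex.re_sum] at h2
      rw [Finset.sum_congr rfl fun i _ => ha2 i]
      exact h2
    have habs_le : ∀ i j, ‖ρ i j‖ ≤ a i * a j := by
      intro i j
      rw [hGram i j]
      exact norm_inner_le_norm (b i) (b j)
    have hpt : ∀ i j : Fin d, (if i = j then (0:ℝ) else ‖ρ i j‖)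
        ≤ (if i = j then 0 else (a i^2 + a j^2)/2) := by
      intro i j
      by_cases hij : i = j
      · simp [hij]
      · simp only [hij, if_false]
        calc ‖ρ i j‖ ≤ a i * a j := habs_le i j
          _ ≤ (a i^2 + a j^2)/2 := by nlinarith [sq_nonneg (a i - a j)]
    have hS : ∑ i, ∑ j, (if i = j then (0:ℝ) else (a i^2 + a j^2)/2) = (d:ℝ) - 1 := by
      have hrow : ∀ i : Fin d, ∑ j, (if i = j then (0:ℝ) else (a i^2 + a j^2)/2)
          = ((d:ℝ) * a i^2 + 1)/2 - a i^2 := by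
        intro i
        rw [sum_ite_ne i (fun j => (a i^2 + a j^2)/2)]
        have : ∑ j, (a i^2 + a j^2)/2 = ((d:ℝ) * a i^2 + 1)/2 := by
          rw [← Finset.sum_div, Finset.sum_add_distrib, Finset.sum_const, Finset.card_univ,
            Fintype.card_fin, nsmul_eq_mul, htr]
        rw [this]
        ring_nf
      rw [Finset.sum_congr rfl fun i _ => hrow i, Finset.sum_sub_distrib, htr,
        ← Finset.sum_div, Finset.sum_add_distrib, ← Finset.mul_sum, htr, Finset.sum_const,
        Finset.card_univ, Fintype.card_fin, nsmul_eq_mul, mul_one]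
      ring
    have hle : Cl1 ρ ≤ (d:ℝ) - 1 := by
      rw [← hS]
      exact Finset.sum_le_sum fun i _ => Finset.sum_le_sum fun j _ => hpt i j
    have hCleq : Cl1 ρ = (d:ℝ) - 1 := le_antisymm hle hge
    -- extract pointwise equality
    have hsum_eq : ∑ p ∈ Finset.univ ×ˢ Finset.univ,
          (if p.1 = p.2 then (0:ℝ) else ‖ρ p.1 p.2‖)
        = ∑ p ∈ Finset.univ ×ˢ Finset.univ,
          (if p.1 = p.2 then (0:ℝ) else (a p.1^2 + a p.2^2)/2) := by
      rw [Finset.sum_product, Finset.sum_product]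
      show Cl1 ρ = _
      rw [hCleq, ← hS]
    have hpointeq := (Finset.sum_eq_sum_iff_of_le (fun p _ => hpt p.1 p.2)).mp hsum_eq
    have habs_eq : ∀ i j : Fin d, i ≠ j → ‖ρ i j‖ = (a i^2 + a j^2)/2 := by
      intro i j hij
      have := hpointeq (i, j) (Finset.mem_product.mpr ⟨Finset.mem_univ i, Finset.mem_univ j⟩)
      simpa [hij] using this
    have haij : ∀ i j : Fin d, a i = a j := by
      intro i j
      by_cases hij : i = j
      · rw [hij]
      · have h1 := habs_eq i j hij
        have h2 := habs_le i j
        have h3 : (a i - a j)^2 ≤ 0 := by nlinarith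
        have h4 : (a i - a j)^2 = 0 := le_antisymm h3 (sq_nonneg _)
        have h5 : a i - a j = 0 := by
          exact pow_eq_zero_iff (two_ne_zero) |>.mp h4
        linarith
    have ha2d : ∀ i, a i ^ 2 = (d:ℝ)⁻¹ := by
      intro i
      have hsum' : ∑ j : Fin d, a i ^ 2 = 1 := by
        rw [← htr]
        exact Finset.sum_congr rfl fun j _ => by rw [haij i j]
      rw [Finset.sum_const, Finset.card_univ, Fintype.card_fin, nsmul_eq_mul] at hsum'
      field_simp
      linarith
    set p0 : Fin d := ⟨0, by omega⟩ with hp0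
    have hbne : ∀ i, b i ≠ 0 := by
      intro i hzero
      have h0 : a i = 0 := by
        show ‖b i‖ = 0
        rw [hzero, norm_zero]
      have h1 := ha2d i
      rw [h0] at h1
      have h2 : (0:ℝ) = (d:ℝ)⁻¹ := by rw [← h1]; ring
      have h3 : (0:ℝ) < (d:ℝ)⁻¹ := inv_pos.mpr hdR
      linarith
    have hdiag_val : ∀ i, ρ i i = (((d:ℝ)⁻¹ : ℝ) : ℂ) := by
      intro i
      have him : (ρ i i).im = 0 := by
        have hherm := hρ.1.1
        have h3 := congrFun (congrFun hherm i) i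
        rw [Matrix.conjTranspose_apply, Complex.star_def] at h3
        exact Complex.conj_eq_iff_im.mp h3
      have hre : (ρ i i).re = (d:ℝ)⁻¹ := by rw [← ha2 i]; exact ha2d i
      apply Complex.ext
      · simpa using hre
      · simpa using him
    have hinner_eq : ∀ j, j ≠ p0 → ‖(inner ℂ (b p0) (b j) : ℂ)‖ = ‖b p0‖ * ‖b j‖ := by
      intro j hj
      have h1 := habs_eq p0 j (fun hh => hj hh.symm)
      have h2 : ‖ρ p0 j‖ = a p0 * a j := by
        rw [h1, haij p0 j]; ring
      calc ‖(inner ℂ (b p0) (b j) : ℂ)‖ = ‖ρ p0 j‖ := by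
            rw [hGram p0 j]
        _ = a p0 * a j := h2
        _ = ‖b p0‖ * ‖b j‖ := rfl
    have hr : ∀ j, ∃ r : ℂ, b j = r • b p0 := by
      intro j
      by_cases hj : j = p0
      · exact ⟨1, by rw [hj, one_smul]⟩
      · obtain ⟨rr, _, hrj⟩ := (norm_inner_eq_norm_iff (hbne p0) (hbne j)).mp (hinner_eq j hj)
        exact ⟨rr, hrj⟩
    choose r hrr using hr
    have hentry : ∀ i j, ρ i j = (starRingEnd ℂ) (r i) * r j * (((d:ℝ)⁻¹ : ℝ) : ℂ) := by
      intro i j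
      rw [hGram i j, hrr i, hrr j, inner_smul_left, inner_smul_right, ← hGram p0 p0,
        hdiag_val p0]
      ring
    have hrabs : ∀ j, ‖r j‖ = 1 := by
      intro j
      have hjj := hentry j j
      rw [show (starRingEnd ℂ) (r j) * r j = ((Complex.normSq (r j) : ℝ) : ℂ) from
        (Complex.normSq_eq_conj_mul_self).symm, hdiag_val j] at hjj
      have hcast : Complex.normSq (r j) * (d:ℝ)⁻¹ = (d:ℝ)⁻¹ := by
        have := congrArg Complex.re hjj
        simpa [Complex.ofReal_mul] using this.symm
      have hns1 : Complex.normSq (r j) = 1 := by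
        have hd0 : (d:ℝ)⁻¹ ≠ 0 := inv_ne_zero hdR.ne'
        field_simp at hcast
        exact hcast
      have habs2 : ‖r j‖^2 = 1 := by
        rw [← Complex.normSq_eq_norm_sq, hns1]
      nlinarith [norm_nonneg (r j), habs2]
    refine ⟨fun j => (starRingEnd ℂ) (r j) * (((Real.sqrt d)⁻¹ : ℝ) : ℂ), ?_, ?_, ?_⟩
    · have : ∀ j : Fin d,
          ‖(starRingEnd ℂ) (r j) * (((Real.sqrt d)⁻¹ : ℝ) : ℂ)‖^2 = (d:ℝ)⁻¹ := by
        intro j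
        rw [norm_mul, Complex.norm_conj, hrabs j, one_mul, Complex.norm_real, Real.norm_eq_abs,
          abs_of_nonneg (inv_nonneg.mpr (Real.sqrt_nonneg _))]
        exact hvsq
      rw [Finset.sum_congr rfl fun j _ => this j, Finset.sum_const, Finset.card_univ,
        Fintype.card_fin, nsmul_eq_mul, mul_inv_cancel₀ hdR.ne']
    · intro j
      beta_reduce
      rw [norm_mul, Complex.norm_conj, hrabs j, one_mul, Complex.norm_real, Real.norm_eq_abs,
        abs_of_nonneg (inv_nonneg.mpr (Real.sqrt_nonneg _)), one_div]
    · ext i j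
      rw [Matrix.vecMulVec_apply, Pi.star_apply, Complex.star_def, hentry i j]
      simp only [_root_.map_mul, Complex.conj_conj, Complex.conj_ofReal]
      have hss : ((((Real.sqrt d)⁻¹ : ℝ)) : ℂ) * ((((Real.sqrt d)⁻¹ : ℝ)) : ℂ)
          = (((d:ℝ)⁻¹ : ℝ) : ℂ) := by
        rw [← Complex.ofReal_mul, ← mul_inv, Real.mul_self_sqrt hdR.le]
      rw [← hss]
      ring
  · -- backward direction
    intro hIn C hC σ hσ
    obtain ⟨ψ, hsum, habs, hρeq⟩ := hIn
    obtain ⟨K, hK, hmap⟩ := MCS_to_any hd ψ habs σ hσ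
    have hmono := hC.2.2.1 ρ hρ (d*d) K hK
    rw [← hρeq] at hmap
    rw [hmap] at hmono
    exact hmono
end
end

section
/- Let ρ be a density matrix on ℂ^d and define C_{ℓ1}(ρ) = ∑_{i≠j} |ρ_{ij}| (sum of absolute values of all off-diagonal entries). Then C_{ℓ1}(ρ) ≤ d − 1, and equality C_{ℓ1}(ρ) = d − 1 holds if and only if ρ belongs to S_MCS. -/
open Matrix BigOperators
open scoped ComplexOrder

noncomputable section

set_option maxHeartbeats 1000000 in
/-- the ℓ₁-norm coherence is at most d−1, with equality exactly on
S_MCS. -/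
theorem l1_coherence_le_and_eq_iff
    {d : ℕ} (ρ : Matrix (Fin d) (Fin d) ℂ) (hρ : IsDensityMatrix ρ) :
    (∑ i, ∑ j, if i ≠ j then ‖ρ i j‖ else 0) ≤ (d : ℝ) - 1 ∧
    ((∑ i, ∑ j, if i ≠ j then ‖ρ i j‖ else 0) = (d : ℝ) - 1 ↔
      InSMCS ρ) := by
  obtain ⟨hpsd, htr⟩ := hρ
  have hd : 0 < d := by
    rcases Nat.eq_zero_or_pos d with h | h
    · exfalso; subst h; simp [Matrix.trace] at htr
    · exact h
  have hdR : (0:ℝ) < d := by exact_mod_cast hd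
  have hsd : Real.sqrt d * Real.sqrt d = d := Real.mul_self_sqrt hdR.le
  have hsd0 : Real.sqrt d ≠ 0 := by positivity
  obtain ⟨B, hB⟩ : ∃ B : Matrix (Fin d) (Fin d) ℂ, ρ = Bᴴ * B := by
    open scoped MatrixOrder in
    obtain ⟨B, hB⟩ := CStarAlgebra.nonneg_iff_eq_star_mul_self.mp hpsd.nonneg
    exact ⟨B, by rw [hB, star_eq_conjTranspose]⟩
  set v : Fin d → EuclideanSpace ℂ (Fin d) := fun i => WithLp.toLp 2 (fun k => B k i) with hv
  have hρv : ∀ i j, ρ i j = inner ℂ (v i) (v j) := by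
    intro i j
    simp [hB, Matrix.mul_apply, PiLp.inner_apply, hv, Matrix.conjTranspose_apply,
      RCLike.inner_apply, mul_comm]
  set a : Fin d → ℝ := fun i => ‖v i‖ with ha
  have ha0 : ∀ i, 0 ≤ a i := fun i => norm_nonneg _
  have hdiag : ∀ i, ρ i i = ((a i ^ 2 : ℝ) : ℂ) := by
    intro i; rw [hρv, inner_self_eq_norm_sq_to_K]; norm_cast
  have hS2 : ∑ i, a i ^ 2 = 1 := by
    have h1 : (Matrix.trace ρ) = ((∑ i, a i ^ 2 : ℝ) : ℂ) := by
      rw [Matrix.trace]; push_cast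
      exact Finset.sum_congr rfl fun i _ => by simpa using hdiag i
    rw [htr] at h1
    exact_mod_cast h1.symm
  have habs : ∀ i j, ‖ρ i j‖ ≤ a i * a j := by
    intro i j
    rw [hρv]
    exact norm_inner_le_norm _ _
  have expand : ∑ i, ∑ j, (a i - a j)^2
      = 2 * ((d:ℝ) * (∑ i, a i ^ 2) - (∑ i, a i)^2) := by
    have h : ∀ i : Fin d, ∑ j, (a i - a j)^2
        = (d:ℝ) * a i ^2 + (∑ j, a j ^2) - 2 * a i * (∑ j, a j) := by
      intro i
      simp_rw [sub_sq, Finset.sum_add_distrib, Finset.sum_sub_distrib, Finset.sum_const,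
        Finset.card_univ, Fintype.card_fin, nsmul_eq_mul, ← Finset.mul_sum, mul_assoc]
      ring
    simp_rw [h, Finset.sum_sub_distrib, Finset.sum_add_distrib, Finset.sum_const,
      Finset.card_univ, Fintype.card_fin, nsmul_eq_mul, ← Finset.mul_sum, ← Finset.sum_mul,
      sq (∑ i, a i)]
    rw [show (∑ x : Fin d, 2 * a x) = 2 * ∑ x, a x from (Finset.mul_sum _ _ _).symm]
    ring
  have hsqnn : (0:ℝ) ≤ ∑ i, ∑ j, (a i - a j)^2 :=
    Finset.sum_nonneg fun i _ => Finset.sum_nonneg fun j _ => sq_nonneg _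
  have hS1sq : (∑ i, a i)^2 ≤ d := by nlinarith [expand, hS2, hsqnn]
  -- the comparison sum
  have hSval : ∑ i, ∑ j, (if i ≠ j then a i * a j else 0)
      = (∑ i, a i)^2 - 1 := by
    have h : ∀ i j : Fin d, (if i ≠ j then a i * a j else 0)
        = a i * a j - (if i = j then a i * a j else 0) := by
      intro i j; by_cases h : i = j <;> simp [h]
    simp_rw [h, Finset.sum_sub_distrib, Finset.sum_ite_eq, Finset.mem_univ, if_true,
      ← Finset.mul_sum, ← Finset.sum_mul, sq (∑ i, a i)]
    rw [show (∑ i, a i * a i) = ∑ i, a i ^ 2 from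
      Finset.sum_congr rfl fun i _ => (sq (a i)).symm, hS2]
  have hTleS : (∑ i, ∑ j, if i ≠ j then ‖ρ i j‖ else 0)
      ≤ ∑ i, ∑ j, (if i ≠ j then a i * a j else 0) := by
    refine Finset.sum_le_sum fun i _ => Finset.sum_le_sum fun j _ => ?_
    by_cases h : i = j
    · simp [h]
    · simp only [h, ne_eq, not_false_iff, if_true]
      exact habs i j
  have hSle : ∑ i, ∑ j, (if i ≠ j then a i * a j else 0) ≤ (d:ℝ) - 1 := by
    rw [hSval]; linarith
  have hmain : (∑ i, ∑ j, if i ≠ j then ‖ρ i j‖ else 0) ≤ (d : ℝ) - 1 :=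
    le_trans hTleS hSle
  refine ⟨hmain, ?_, ?_⟩
  · -- forward: equality implies InSMCS
    intro hT
    have hSeq : ∑ i, ∑ j, (if i ≠ j then a i * a j else 0) = (d:ℝ) - 1 :=
      le_antisymm hSle (hT ▸ hTleS)
    have hS1 : (∑ i, a i)^2 = d := by rw [hSval] at hSeq; linarith
    have hzero : ∑ i, ∑ j, (a i - a j)^2 = 0 := by
      rw [expand, hS2, hS1]; ring
    have haeq : ∀ i j : Fin d, a i = a j := by
      intro i j
      have h1 := (Finset.sum_eq_zero_iff_of_nonneg
        (fun i _ => Finset.sum_nonneg fun j _ => sq_nonneg (a i - a j))).mp hzero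
        i (Finset.mem_univ i)
      have h2 := (Finset.sum_eq_zero_iff_of_nonneg
        (fun j _ => sq_nonneg (a i - a j))).mp h1 j (Finset.mem_univ j)
      have := sq_eq_zero_iff.mp h2
      linarith
    have hai2 : ∀ i, a i ^ 2 = 1 / d := by
      intro i
      have : ∑ j : Fin d, a i ^ 2 = 1 := by
        rw [← hS2]; exact Finset.sum_congr rfl fun j _ => by rw [haeq i j]
      rw [Finset.sum_const, Finset.card_univ, Fintype.card_fin, nsmul_eq_mul] at this
      field_simp at this ⊢
      linarith
    have haval : ∀ i, a i = 1 / Real.sqrt d := by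
      intro i
      have h1 : (1 / Real.sqrt d)^2 = 1 / d := by
        rw [div_pow, one_pow, sq, hsd]
      rw [← Real.sqrt_sq (ha0 i), hai2 i, one_div, Real.sqrt_inv, one_div]
    have haipos : ∀ i, 0 < a i := by
      intro i; rw [haval i]; positivity
    set i0 : Fin d := ⟨0, hd⟩ with hi0
    have hvne : ∀ i, v i ≠ 0 := by
      intro i h
      have : a i = 0 := by rw [ha]; simp [h]
      exact absurd this (ne_of_gt (haipos i))
    -- termwise equality
    have htermeq : ∀ i j, i ≠ j → ‖ρ i j‖ = a i * a j := by
      intro i j hij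
      have houter := (Finset.sum_eq_sum_iff_of_le
        (fun i _ => Finset.sum_le_sum fun j _ => by
          by_cases h : i = j
          · simp [h]
          · simp only [h, ne_eq, not_false_iff, if_true]; exact habs i j)).mp
        (hT.trans hSeq.symm) i (Finset.mem_univ i)
      have hinner := (Finset.sum_eq_sum_iff_of_le
        (fun j _ => by
          by_cases h : i = j
          · simp [h]
          · simp only [h, ne_eq, not_false_iff, if_true]; exact habs i j)).mp
        houter j (Finset.mem_univ j)
      simpa [hij] using hinner
    have hnormeq : ∀ i j, ‖(inner ℂ (v i) (v j) : ℂ)‖ = ‖v i‖ * ‖v j‖ := by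
      intro i j
      by_cases h : i = j
      · subst h; rw [inner_self_eq_norm_sq_to_K]; simp [sq, norm_nonneg, abs_of_nonneg]
      · rw [← hρv]
        exact htermeq i j h
    have hc : ∀ j, ∃ r : ℂ, r ≠ 0 ∧ v j = r • v i0 := by
      intro j
      exact (norm_inner_eq_norm_iff (hvne i0) (hvne j)).mp (hnormeq i0 j)
    choose c hc0 hcv using hc
    have hcabs : ∀ j, ‖c j‖ = 1 := by
      intro j
      have h1 : a j = ‖c j‖ * a i0 := by
        rw [ha]; simp only; rw [hcv j, norm_smul]
      have h2 := haval j; have h3 := haval i0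
      rw [h2, h3] at h1
      field_simp at h1
      have := haipos i0
      nlinarith [norm_nonneg (c j)]
    refine ⟨fun j => (starRingEnd ℂ) (c j) * (a i0 : ℂ), ?_, ?_, ?_⟩
    · have : ∀ j : Fin d, ‖(starRingEnd ℂ) (c j) * (a i0 : ℂ)‖ ^ 2 = 1/d := by
        intro j
        rw [norm_mul, Complex.norm_conj, hcabs j, one_mul, Complex.norm_real, Real.norm_eq_abs,
          abs_of_nonneg (ha0 i0), hai2 i0]
      simp_rw [this]
      rw [Finset.sum_const, Finset.card_univ, Fintype.card_fin, nsmul_eq_mul]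
      field_simp
    · intro j
      show ‖(starRingEnd ℂ) (c j) * ((a i0 : ℝ) : ℂ)‖ = 1 / Real.sqrt d
      rw [norm_mul, Complex.norm_conj, hcabs j, one_mul, Complex.norm_real, Real.norm_eq_abs,
        abs_of_nonneg (ha0 i0), haval i0]
    · ext i j
      rw [hρv i j, hcv i, hcv j, inner_smul_left, inner_smul_right,
        inner_self_eq_norm_sq_to_K]
      simp only [Matrix.vecMulVec_apply, Pi.star_apply, star_mul', Complex.star_def,
        Complex.conj_conj, Complex.conj_ofReal]
      have hva : (‖v i0‖ : ℝ) = a i0 := rfl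
      rw [hva]
      push_cast
      ring_nf
      norm_cast
  · -- backward: InSMCS implies equality
    rintro ⟨ψ, hsum, hmod, rfl⟩
    have hent : ∀ i j : Fin d, (if i ≠ j then ‖Matrix.vecMulVec ψ (star ψ) i j‖ else 0)
        = (1/d:ℝ) - (if i = j then (1/d:ℝ) else 0) := by
      intro i j
      by_cases h : i = j
      · simp [h]
      · simp only [h, ne_eq, not_false_iff, if_true, if_false, sub_zero,
          Matrix.vecMulVec_apply, Pi.star_apply, Complex.star_def, norm_mul,
          Complex.norm_conj, hmod]
        rw [div_mul_div_comm, one_mul, hsd]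
    simp_rw [hent, Finset.sum_sub_distrib, Finset.sum_ite_eq, Finset.mem_univ, if_true,
      Finset.sum_const, Finset.card_univ, Fintype.card_fin, nsmul_eq_mul]
    field_simp
end
end

section
/- Let ρ be a density matrix on ℂ^d with d ≥ 1, and define the relative entropy of coherence C_rel(ρ) = S(Δ(ρ)) − S(ρ), where Δ(ρ) is the diagonal matrix with the same diagonal entries as ρ, and S(τ) = ∑_i negMulLog(λ_i(τ)) with λ_i(τ) the eigenvalues of the Hermitian matrix τ (negMulLog x = −x·log x). Then C_rel(ρ) ≤ log d, and equality C_rel(ρ) = log d holds if and only if ρ belongs to S_MCS. -/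
open Matrix BigOperators
open scoped ComplexOrder

noncomputable section

open Polynomial in
lemma aux_map_mul_one' {n : Type*} [Fintype n] [DecidableEq n]
    (U V : Matrix n n ℂ) (h : U * V = 1) :
    U.map (C : ℂ → ℂ[X]) * V.map C = 1 := by
  have h2 : (U * V).map (C : ℂ →+* ℂ[X]) = (1 : Matrix n n ℂ).map (C : ℂ →+* ℂ[X]) := by rw [h]
  rw [Matrix.map_mul] at h2
  rwa [Matrix.map_one _ (map_zero _) (map_one _)] at h2

open Polynomial in
lemma aux_charpoly_conj' {n : Type*} [Fintype n] [DecidableEq n]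
    (U D V : Matrix n n ℂ) (h : U * V = 1) :
    (U * D * V).charpoly = D.charpoly := by
  have hUV : U.map (C : ℂ → ℂ[X]) * V.map C = 1 := aux_map_mul_one' U V h
  have hcm : charmatrix (U * D * V) = U.map C * charmatrix D * V.map C := by
    unfold charmatrix
    rw [RingHom.mapMatrix_apply, RingHom.mapMatrix_apply, Matrix.mul_sub, Matrix.sub_mul]
    congr 1
    · have hcomm : U.map (C : ℂ → ℂ[X]) * Matrix.scalar n (X : ℂ[X])
          = Matrix.scalar n X * U.map C :=
        ((Matrix.scalar_commute (X : ℂ[X]) (fun r => Commute.all _ _) (U.map C))).symm.eq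
      rw [hcomm, Matrix.mul_assoc, hUV, Matrix.mul_one]
    · rw [← Matrix.map_mul, ← Matrix.map_mul]
  rw [Matrix.charpoly, Matrix.charpoly, hcm, Matrix.det_mul, Matrix.det_mul]
  have hdet : (U.map (C : ℂ → ℂ[X])).det * (V.map C).det = 1 := by
    rw [← Matrix.det_mul, hUV, Matrix.det_one]
  calc (U.map (C : ℂ → ℂ[X])).det * (charmatrix D).det * (V.map C).det
      = (charmatrix D).det * ((U.map (C : ℂ → ℂ[X])).det * (V.map C).det) := by ring
    _ = (charmatrix D).det := by rw [hdet, mul_one]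

open Polynomial in
lemma aux_eig_multiset {d : ℕ} {A : Matrix (Fin d) (Fin d) ℂ} (hA : A.IsHermitian) :
    Finset.univ.val.map (fun i => ((hA.eigenvalues i : ℂ))) = A.charpoly.roots := by
  have h1 : A.charpoly
      = (Matrix.diagonal ((RCLike.ofReal : ℝ → ℂ) ∘ hA.eigenvalues)).charpoly := by
    conv_lhs => rw [hA.spectral_theorem]
    exact aux_charpoly_conj' _ _ _ ((Matrix.mem_unitaryGroup_iff).mp (hA.eigenvectorUnitary).2)
  rw [h1, Matrix.charpoly_of_upperTriangular _ (Matrix.blockTriangular_diagonal _)]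
  have h2 : ∏ i : Fin d,
        (X - C ((Matrix.diagonal ((RCLike.ofReal : ℝ → ℂ) ∘ hA.eigenvalues)) i i))
      = ((Finset.univ.val.map (fun i => ((hA.eigenvalues i : ℂ)))).map
          (fun a => X - C a)).prod := by
    rw [Multiset.map_map]
    simp only [Finset.prod_eq_multiset_prod]
    congr 1
    apply Multiset.map_congr rfl
    intro i _
    simp [Matrix.diagonal_apply_eq]
  rw [h2, Polynomial.roots_multiset_prod_X_sub_C]

open Polynomial in
lemma aux_diag_charpoly_roots {d : ℕ} (v : Fin d → ℂ) :
    (Matrix.diagonal v).charpoly.roots = Finset.univ.val.map v := by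
  rw [Matrix.charpoly_of_upperTriangular _ (Matrix.blockTriangular_diagonal _)]
  have h2 : ∏ i : Fin d, (X - C ((Matrix.diagonal v) i i))
      = ((Finset.univ.val.map v).map (fun a => X - C a)).prod := by
    rw [Multiset.map_map]
    simp only [Finset.prod_eq_multiset_prod]
    congr 1
    apply Multiset.map_congr rfl
    intro i _
    simp [Matrix.diagonal_apply_eq]
  rw [h2, Polynomial.roots_multiset_prod_X_sub_C]

lemma aux_entropy_le_log {d : ℕ} (hd : 1 ≤ d) (p : Fin d → ℝ) (hp : ∀ i, 0 ≤ p i)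
    (hs : ∑ i, p i = 1) :
    (∑ i, Real.negMulLog (p i) ≤ Real.log d) ∧
    (∑ i, Real.negMulLog (p i) = Real.log d ↔ ∀ i, p i = (d : ℝ)⁻¹) := by
  have hd0 : (0:ℝ) < d := by exact_mod_cast hd
  set w : Fin d → ℝ := fun _ => (d:ℝ)⁻¹ with hw
  set x : Fin d → ℝ := fun i => d * p i with hx
  have h₀ : ∀ i ∈ Finset.univ, (0:ℝ) < w i := fun i _ => by positivity
  have h₁ : ∑ i : Fin d, w i = 1 := by
    simp [hw, Finset.card_univ]
    field_simp
  have hmem : ∀ i ∈ Finset.univ, x i ∈ Set.Ici (0:ℝ) := fun i _ => mul_nonneg hd0.le (hp i)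
  have hsum : ∑ i, w i • x i = 1 := by
    rw [← hs]
    apply Finset.sum_congr rfl
    intro i _
    simp [hw, hx, smul_eq_mul]
    field_simp
  have hval : ∑ i, w i • Real.negMulLog (x i) = (∑ i, Real.negMulLog (p i)) - Real.log d := by
    have hterm : ∀ i, w i • Real.negMulLog (x i)
        = Real.negMulLog (p i) + (- Real.log d) * p i := by
      intro i
      simp only [hw, hx, smul_eq_mul, Real.negMulLog_mul]
      have hnd : Real.negMulLog d = - d * Real.log d := rfl
      rw [hnd]
      field_simp
      ring
    rw [Finset.sum_congr rfl (fun i _ => hterm i), Finset.sum_add_distrib, ← Finset.mul_sum, hs]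
    ring
  have hJ := Real.concaveOn_negMulLog.le_map_sum (fun i _ => (h₀ i (Finset.mem_univ i)).le) h₁ hmem
  rw [hsum, hval, Real.negMulLog_one] at hJ
  constructor
  · linarith
  · have hEq := Real.strictConcaveOn_negMulLog.map_sum_eq_iff h₀ h₁ hmem
    rw [hsum, hval, Real.negMulLog_one] at hEq
    constructor
    · intro h
      have h0 : (0:ℝ) = (∑ i, Real.negMulLog (p i)) - Real.log d := by linarith
      have hall := hEq.mp h0
      intro i
      have hi := hall i (Finset.mem_univ i)
      simp only [hx] at hi
      field_simp at hi ⊢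
      linarith [hi]
    · intro h
      have hxj : ∀ j ∈ Finset.univ, x j = 1 := by
        intro j _
        simp only [hx, h j]
        field_simp
      have := hEq.mpr hxj
      linarith

lemma aux_entropy_nonneg {d : ℕ} (p : Fin d → ℝ) (hp : ∀ i, 0 ≤ p i)
    (hs : ∑ i, p i = 1) :
    (0 ≤ ∑ i, Real.negMulLog (p i)) ∧
    (∑ i, Real.negMulLog (p i) = 0 ↔ ∀ i, p i = 0 ∨ p i = 1) := by
  have hle : ∀ i, p i ≤ 1 := by
    intro i
    rw [← hs]
    exact Finset.single_le_sum (fun j _ => hp j) (Finset.mem_univ i)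
  have hterm : ∀ i ∈ Finset.univ, 0 ≤ Real.negMulLog (p i) :=
    fun i _ => Real.negMulLog_nonneg (hp i) (hle i)
  refine ⟨Finset.sum_nonneg hterm, ?_⟩
  rw [Finset.sum_eq_zero_iff_of_nonneg hterm]
  constructor
  · intro h i
    have hi := h i (Finset.mem_univ i)
    simp only [Real.negMulLog, neg_mul, neg_eq_zero, mul_eq_zero] at hi
    rcases hi with h1 | h2
    · exact Or.inl h1
    · rcases Real.log_eq_zero.mp h2 with h | h | h
      · exact Or.inl h
      · exact Or.inr h
      · exact absurd h (by linarith [hp i])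
  · intro h i _
    rcases h i with h | h <;> simp [h]

/-- the relative entropy of coherence is at most log d, with equality
exactly on S_MCS. -/
theorem relative_entropy_coherence_le_and_eq_iff
    {d : ℕ} (hd : 1 ≤ d) (ρ : Matrix (Fin d) (Fin d) ℂ) (hρ : IsDensityMatrix ρ)
    (hΔ : (Matrix.diagonal fun i => ρ i i).IsHermitian) :
    ((∑ i, Real.negMulLog (hΔ.eigenvalues i)) -
        (∑ i, Real.negMulLog (hρ.1.1.eigenvalues i)) ≤ Real.log d) ∧
    ((∑ i, Real.negMulLog (hΔ.eigenvalues i)) -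
        (∑ i, Real.negMulLog (hρ.1.1.eigenvalues i)) = Real.log d ↔ InSMCS ρ) := by
  set p : Fin d → ℝ := fun i => (ρ i i).re with hpdef
  set q : Fin d → ℝ := hρ.1.1.eigenvalues with hqdef
  have hpos : ∀ i, 0 ≤ ρ i i := by
    intro i
    exact hρ.1.diag_nonneg
  have hp0 : ∀ i, 0 ≤ p i := by
    intro i
    have := (Complex.le_def.mp (hpos i)).1
    simpa [hpdef] using this
  have htr : ∑ i, ρ i i = 1 := by simpa [Matrix.trace, Matrix.diag] using hρ.2
  have hp1 : ∑ i, p i = 1 := by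
    have h1 : (∑ i, ρ i i).re = (1 : ℂ).re := by rw [htr]
    simpa [Complex.re_sum, hpdef] using h1
  have hq0 : ∀ i, 0 ≤ q i := fun i => hρ.1.eigenvalues_nonneg i
  have hq1 : ∑ i, q i = 1 := by
    have h1 : ρ.trace = (Finset.univ.val.map (fun i => ((q i : ℂ)))).sum := by
      rw [Matrix.trace_eq_sum_roots_charpoly, ← aux_eig_multiset hρ.1.1]
    have h2 : (Finset.univ.val.map (fun i => ((q i : ℂ)))).sum = ∑ i, ((q i : ℂ)) := rfl
    have h3 : (∑ i, ((q i : ℂ))) = ((∑ i, q i : ℝ) : ℂ) := by push_cast; rfl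
    have h4 : ((∑ i, q i : ℝ) : ℂ) = 1 := by rw [← h3, ← h2, ← h1, hρ.2]
    exact_mod_cast h4
  have hΔeq : ∑ i, Real.negMulLog (hΔ.eigenvalues i) = ∑ i, Real.negMulLog (p i) := by
    have hms : Finset.univ.val.map (fun i => ((hΔ.eigenvalues i : ℂ)))
        = Finset.univ.val.map (fun i => ρ i i) := by
      rw [aux_eig_multiset hΔ, aux_diag_charpoly_roots]
    have h4 := congrArg (fun s : Multiset ℂ => (s.map (fun z => Real.negMulLog z.re)).sum) hms
    simp only [Multiset.map_map, Function.comp] at h4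
    have h5 : (Finset.univ.val.map (fun i => Real.negMulLog ((hΔ.eigenvalues i : ℂ)).re)).sum
        = ∑ i, Real.negMulLog (hΔ.eigenvalues i) := by
      have he : Finset.univ.val.map (fun x => Real.negMulLog ((hΔ.eigenvalues x : ℂ)).re)
          = Finset.univ.val.map (fun x => Real.negMulLog (hΔ.eigenvalues x)) :=
        Multiset.map_congr rfl (fun x _ => by rw [Complex.ofReal_re])
      rw [he]
      rfl
    have h6 : (Finset.univ.val.map (fun i => Real.negMulLog ((ρ i i).re))).sum
        = ∑ i, Real.negMulLog (p i) := rfl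
    rw [← h5, ← h6]
    exact h4
  obtain ⟨hEle, hEeq⟩ := aux_entropy_le_log hd p hp0 hp1
  obtain ⟨hQ0, hQiff⟩ := aux_entropy_nonneg q hq0 hq1
  rw [hΔeq]
  constructor
  · linarith
  · constructor
    · intro h
      have hHp : ∑ i, Real.negMulLog (p i) = Real.log d := le_antisymm hEle (by linarith)
      have hHq : ∑ i, Real.negMulLog (q i) = 0 := by linarith
      have hpd := hEeq.mp hHp
      have hq01 := hQiff.mp hHq
      obtain ⟨k, hk⟩ : ∃ k, q k = 1 := by
        by_contra hc
        push_neg at hc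
        have hz : ∀ i, q i = 0 := fun i => (hq01 i).resolve_right (hc i)
        rw [Finset.sum_congr rfl (fun i _ => hz i)] at hq1
        simp at hq1
      have hq0' : ∀ j, j ≠ k → q j = 0 := by
        intro j hj
        have hsplit := Finset.add_sum_erase Finset.univ q (Finset.mem_univ k)
        rw [hq1, hk] at hsplit
        have hzero : ∑ i ∈ Finset.univ.erase k, q i = 0 := by linarith
        exact (Finset.sum_eq_zero_iff_of_nonneg (fun i _ => hq0 i)).mp hzero j
          (Finset.mem_erase.mpr ⟨hj, Finset.mem_univ j⟩)
      set U : Matrix (Fin d) (Fin d) ℂ := (hρ.1.1.eigenvectorUnitary : Matrix (Fin d) (Fin d) ℂ)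
        with hUdef
      set ψ : Fin d → ℂ := fun j => U j k with hψdef
      have hfun : (RCLike.ofReal : ℝ → ℂ) ∘ q = fun a => if a = k then (1 : ℂ) else 0 := by
        funext a
        by_cases ha : a = k
        · subst ha; simp [hk]
        · simp [ha, hq0' a ha]
      have hdiag1 : Matrix.diagonal ((RCLike.ofReal : ℝ → ℂ) ∘ q)
          = Matrix.diagonal (fun a => if a = k then (1 : ℂ) else 0) :=
        congrArg Matrix.diagonal hfun
      have hrent : ∀ i j, ρ i j = ψ i * star (ψ j) := by
        intro i j
        conv_lhs => rw [hρ.1.1.spectral_theorem]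
        rw [hdiag1, Unitary.conjStarAlgAut_apply, Matrix.mul_apply]
        rw [Finset.sum_eq_single k]
        · simp [Matrix.mul_diagonal, Matrix.star_apply, hψdef, hUdef]
        · intro b _ hb
          simp [Matrix.mul_diagonal, hb]
        · intro hk'
          exact absurd (Finset.mem_univ k) hk'
      have habs2 : ∀ j, ‖ψ j‖ ^ 2 = p j := by
        intro j
        have h1 := hrent j j
        rw [Complex.star_def, Complex.mul_conj] at h1
        have h2 : (ρ j j).re = Complex.normSq (ψ j) := by rw [h1]; simp
        rw [Complex.sq_norm, hpdef]
        exact h2.symm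
      refine ⟨ψ, ?_, ?_, ?_⟩
      · rw [Finset.sum_congr rfl (fun j _ => habs2 j)]
        exact hp1
      · intro j
        have h2 : ‖ψ j‖ ^ 2 = (d : ℝ)⁻¹ := by rw [habs2 j, hpd j]
        have h3 : ‖ψ j‖ = Real.sqrt ((d : ℝ)⁻¹) := by
          rw [← h2, Real.sqrt_sq (norm_nonneg _)]
        rw [h3, Real.sqrt_inv, one_div]
      · ext i j
        rw [hrent i j, Matrix.vecMulVec_apply]
        simp [Pi.star_apply]

    · intro hS
      have hd0 : (0 : ℝ) < d := by exact_mod_cast hd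
      obtain ⟨ψ, hsum1, habs, hρψ⟩ := hS
      have hpj : ∀ j, p j = (d : ℝ)⁻¹ := by
        intro j
        have h1 : ρ j j = ψ j * star (ψ j) := by
          rw [hρψ]; simp [Matrix.vecMulVec_apply]
        have h2 : (ρ j j).re = ‖ψ j‖ ^ 2 := by
          rw [h1, Complex.star_def, Complex.mul_conj]
          simp [Complex.sq_norm]
        rw [hpdef]
        simp only
        rw [h2, habs j, div_pow, one_pow, Real.sq_sqrt hd0.le, one_div]
      have hHp : ∑ i, Real.negMulLog (p i) = Real.log d := hEeq.mpr hpj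
      have hkey : ∑ b, ψ b * star (ψ b) = (1 : ℂ) := by
        have e : ∀ b, ψ b * star (ψ b) = ((‖ψ b‖ ^ 2 : ℝ) : ℂ) := by
          intro b
          rw [Complex.star_def, Complex.mul_conj, Complex.sq_norm]
        rw [Finset.sum_congr rfl (fun b _ => e b), ← Complex.ofReal_sum, hsum1,
          Complex.ofReal_one]
      have hproj : ρ * ρ = ρ := by
        ext i j
        rw [Matrix.mul_apply]
        calc ∑ b, ρ i b * ρ b j
            = ∑ b, (ψ i * star (ψ j)) * (ψ b * star (ψ b)) := by
              apply Finset.sum_congr rfl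
              intro b _
              rw [hρψ]
              simp only [Matrix.vecMulVec_apply, Pi.star_apply]
              ring
          _ = (ψ i * star (ψ j)) * ∑ b, (ψ b * star (ψ b)) := by rw [← Finset.mul_sum]
          _ = ψ i * star (ψ j) := by rw [hkey, mul_one]
          _ = ρ i j := by rw [hρψ]; simp [Matrix.vecMulVec_apply]
      have hq01 : ∀ i, q i = 0 ∨ q i = 1 := by
        intro i
        have hv := hρ.1.1.mulVec_eigenvectorBasis i
        set v : Fin d → ℂ := ⇑(hρ.1.1.eigenvectorBasis i) with hvdef
        have hvne : v ≠ 0 := by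
          intro h0
          have hn := hρ.1.1.eigenvectorBasis.orthonormal.1 i
          have hb0 : hρ.1.1.eigenvectorBasis i = 0 := by
            apply PiLp.ext
            intro j
            exact congrFun h0 j
          rw [hb0] at hn
          simp at hn
        have h2 : ((q i * q i : ℝ)) • v = (q i : ℝ) • v := by
          have e1 : ρ *ᵥ (ρ *ᵥ v) = (q i * q i : ℝ) • v := by
            rw [hv, Matrix.mulVec_smul, hv, smul_smul]
          have e2 : ρ *ᵥ (ρ *ᵥ v) = ρ *ᵥ v := by
            rw [Matrix.mulVec_mulVec, hproj]
          rw [← e1, e2, hv]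
        have h3 : ((q i * q i - q i : ℝ)) • v = 0 := by
          rw [sub_smul, h2, sub_self]
        rcases smul_eq_zero.mp h3 with hc | hc
        · have hfac : q i * (q i - 1) = 0 := by linear_combination hc
          rcases mul_eq_zero.mp hfac with hc2 | hc2
          · exact Or.inl hc2
          · exact Or.inr (by linarith)
        · exact absurd hc hvne
      have hHq : ∑ i, Real.negMulLog (q i) = 0 := hQiff.mpr hq01
      rw [hHp, hHq]
      ring
end
end

section
/- Let ρ be a density matrix on ℂ^d that is not pure (i.e., ρ ≠ ψψᴴ for every unit vector ψ, equivalently ρ has rank at least 2). Then ρ admits a finite pure-state ensemble decomposition ρ = ∑_k q_k φ_k φ_kᴴ, with q_k > 0 summing to 1 and each φ_k a unit vector, in which at least one of the rank-one projections φ_k φ_kᴴ does not belong to S_MCS. Consequently, no non-pure density matrix has all of its pure-state decompositions supported entirely on S_MCS. -/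
open Matrix BigOperators
open scoped ComplexOrder

noncomputable section

private lemma diag_of_inSMCS {d : ℕ} {M : Matrix (Fin d) (Fin d) ℂ} (h : InSMCS M) (j : Fin d) :
    M j j = (((1:ℝ)/(d:ℝ) : ℝ) : ℂ) := by
  obtain ⟨ψ, -, hmod, rfl⟩ := h
  have h1 : Matrix.vecMulVec ψ (star ψ) j j = ψ j * (starRingEnd ℂ) (ψ j) := by
    simp [Matrix.vecMulVec_apply]
  rw [h1, Complex.mul_conj]
  congr 1
  rw [← Complex.sq_norm, hmod j, div_pow, one_pow, Real.sq_sqrt (by positivity)]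

private lemma sum_abs_sq_of_sum_mul_conj {d : ℕ} {v : Fin d → ℂ}
    (h : ∑ j, v j * (starRingEnd ℂ) (v j) = (1:ℂ)) :
    ∑ j, ‖v j‖ ^ 2 = 1 := by
  have h2 : ∑ j, v j * (starRingEnd ℂ) (v j) = ((∑ j, ‖v j‖ ^ 2 : ℝ) : ℂ) := by
    rw [Complex.ofReal_sum]
    refine Finset.sum_congr rfl fun j _ => ?_
    rw [Complex.sq_norm, Complex.mul_conj]
  rw [h2] at h
  exact_mod_cast h

private lemma pair_split {d : ℕ} (a b : Fin d → ℂ) (α β s1 s2 : ℝ) (z : ℂ)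
    (hz : z * (starRingEnd ℂ) z = 1)
    (h1 : ((α:ℂ))^2 * ((s1:ℂ) + (s2:ℂ)) = (s1:ℂ))
    (h2 : ((β:ℂ))^2 * ((s1:ℂ) + (s2:ℂ)) = (s2:ℂ)) :
    ((((s1+s2)/2 : ℝ)):ℂ) • Matrix.vecMulVec (fun j => (α:ℂ) * a j + z * (β:ℂ) * b j)
        (star (fun j => (α:ℂ) * a j + z * (β:ℂ) * b j))
      + ((((s1+s2)/2 : ℝ)):ℂ) • Matrix.vecMulVec (fun j => (α:ℂ) * a j + (-z) * (β:ℂ) * b j)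
        (star (fun j => (α:ℂ) * a j + (-z) * (β:ℂ) * b j))
      = ((s1:ℝ):ℂ) • Matrix.vecMulVec a (star a) + ((s2:ℝ):ℂ) • Matrix.vecMulVec b (star b) := by
  ext i j
  simp only [Matrix.add_apply, Matrix.smul_apply, Matrix.vecMulVec_apply, Pi.star_apply,
    Complex.star_def, map_add, _root_.map_mul, Complex.conj_ofReal, map_neg, smul_eq_mul]
  push_cast
  linear_combination (a i * (starRingEnd ℂ) (a j)) * h1 + (b i * (starRingEnd ℂ) (b j)) * h2
    + (((s1:ℂ)+(s2:ℂ)) * (β:ℂ)^2 * (b i * (starRingEnd ℂ) (b j))) * hz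

private lemma w_norm {d : ℕ} (a b : Fin d → ℂ) (α β : ℝ) (z : ℂ)
    (hz : z * (starRingEnd ℂ) z = 1)
    (haa : ∑ j, (starRingEnd ℂ) (a j) * a j = 1)
    (hbb : ∑ j, (starRingEnd ℂ) (b j) * b j = 1)
    (hab : ∑ j, (starRingEnd ℂ) (a j) * b j = 0)
    (hba : ∑ j, (starRingEnd ℂ) (b j) * a j = 0)
    (hαβ : ((α:ℂ))^2 + ((β:ℂ))^2 = 1) :
    ∑ j, ((α:ℂ) * a j + z * (β:ℂ) * b j) * (starRingEnd ℂ) ((α:ℂ) * a j + z * (β:ℂ) * b j)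
      = 1 := by
  calc ∑ j, ((α:ℂ) * a j + z * (β:ℂ) * b j) * (starRingEnd ℂ) ((α:ℂ) * a j + z * (β:ℂ) * b j)
      = ∑ j, ((α:ℂ)^2 * ((starRingEnd ℂ) (a j) * a j)
          + (z * (starRingEnd ℂ) z) * (β:ℂ)^2 * ((starRingEnd ℂ) (b j) * b j)
          + ((α:ℂ) * (β:ℂ) * (starRingEnd ℂ) z) * ((starRingEnd ℂ) (b j) * a j)
          + ((α:ℂ) * (β:ℂ) * z) * ((starRingEnd ℂ) (a j) * b j)) := by
        refine Finset.sum_congr rfl fun j _ => ?_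
        simp only [map_add, _root_.map_mul, Complex.conj_ofReal]
        ring
    _ = 1 := by
        simp only [Finset.sum_add_distrib, ← Finset.mul_sum, haa, hbb, hab, hba]
        linear_combination hαβ + (β:ℂ)^2 * hz


/-- the core combinatorial/algebraic argument, with the spectral data abstracted. -/
private lemma main_aux {d : ℕ} (ρ : Matrix (Fin d) (Fin d) ℂ) (hρ : IsDensityMatrix ρ)
    (hpure : ¬ ∃ ψ : Fin d → ℂ, (∑ j, ‖ψ j‖ ^ 2 = 1) ∧
      ρ = Matrix.vecMulVec ψ (star ψ))
    (u : Fin d → Fin d → ℂ) (lam : Fin d → ℝ)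
    (horth : ∀ k l, ∑ j, (starRingEnd ℂ) (u k j) * (u l j) = if k = l then 1 else 0)
    (hspec : ρ = ∑ i, ((lam i : ℝ) : ℂ) • Matrix.vecMulVec (u i) (star (u i)))
    (hnn : ∀ i, 0 ≤ lam i) :
    ∃ (N : ℕ) (q : Fin N → ℝ) (φ : Fin N → Fin d → ℂ),
      (∀ k, 0 < q k) ∧ (∑ k, q k = 1) ∧
      (∀ k, ∑ j, ‖φ k j‖ ^ 2 = 1) ∧
      ρ = ∑ k, (q k : ℂ) • Matrix.vecMulVec (φ k) (star (φ k)) ∧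
      ∃ k, ¬ InSMCS (Matrix.vecMulVec (φ k) (star (φ k))) := by
  classical
  have hd : 0 < d := by
    rcases Nat.eq_zero_or_pos d with h | h
    · exfalso
      have := hρ.2
      subst h
      simp [Matrix.trace] at this
    · exact h
  -- complex column norms
  have huu : ∀ k, ∑ j, u k j * (starRingEnd ℂ) (u k j) = 1 := by
    intro k
    have := horth k k
    simpa [mul_comm] using this
  have hnorm : ∀ k, ∑ j, ‖u k j‖ ^ 2 = 1 := fun k => sum_abs_sq_of_sum_mul_conj (huu k)
  -- eigenvalues sum to one
  have htr : ∑ i, lam i = 1 := by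
    have h1 := hρ.2
    rw [hspec, Matrix.trace_sum] at h1
    have h2 : ∀ i : Fin d, Matrix.trace (((lam i : ℝ) : ℂ) • Matrix.vecMulVec (u i) (star (u i)))
        = ((lam i : ℝ) : ℂ) := by
      intro i
      rw [Matrix.trace_smul]
      have : Matrix.trace (Matrix.vecMulVec (u i) (star (u i))) = 1 := by
        rw [Matrix.trace]
        simpa [Matrix.diag, Matrix.vecMulVec_apply] using huu i
      rw [this]; simp
    rw [Finset.sum_congr rfl (fun i _ => h2 i)] at h1
    exact_mod_cast h1
  set t : Finset (Fin d) := Finset.univ.filter (fun i => 0 < lam i) with ht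
  have hlamt : ∀ i ∈ t, 0 < lam i := fun i hi => (Finset.mem_filter.mp hi).2
  have hzero : ∀ i ∈ (Finset.univ : Finset (Fin d)), i ∉ t → lam i = 0 := by
    intro i _ hi
    have : ¬ 0 < lam i := by simpa [ht] using hi
    linarith [hnn i]
  have hsum_t : ρ = ∑ i ∈ t, ((lam i : ℝ) : ℂ) • Matrix.vecMulVec (u i) (star (u i)) := by
    rw [hspec]
    symm
    refine Finset.sum_subset (Finset.subset_univ t) ?_
    intro x hx hxt
    rw [hzero x hx hxt]
    simp
  have htr_t : ∑ i ∈ t, lam i = 1 := by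
    rw [← htr]
    exact Finset.sum_subset (Finset.subset_univ t) (fun x hx hxt => hzero x hx hxt)
  -- at least two positive eigenvalues
  have hcard : 1 < t.card := by
    by_contra hle
    push_neg at hle
    interval_cases h : t.card
    · rw [Finset.card_eq_zero.mp h] at htr_t; simp at htr_t
    · obtain ⟨k, hk⟩ := Finset.card_eq_one.mp h
      rw [hk] at htr_t hsum_t
      simp at htr_t hsum_t
      exact hpure ⟨u k, hnorm k, by rw [hsum_t, htr_t]; simp⟩
  obtain ⟨k1, hk1, k2, hk2, hne⟩ := Finset.one_lt_card.mp hcard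
  have hdne : ((((1:ℝ)/(d:ℝ)) : ℝ) : ℂ) ≠ 0 := by
    rw [ne_eq, Complex.ofReal_eq_zero, div_eq_zero_iff]
    push_neg
    constructor <;> [skip; intro h] <;> simp_all <;> omega
  by_cases hcase : ∀ j, u k1 j * u k2 j = 0
  · -- Case B : disjoint supports, u k1 has a zero coordinate
    obtain ⟨j0, hj0⟩ : ∃ j0, u k2 j0 ≠ 0 := by
      by_contra hall
      push_neg at hall
      have := huu k2
      simp [hall] at this
    have hk1j0 : u k1 j0 = 0 := by
      rcases mul_eq_zero.mp (hcase j0) with h | h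
      · exact h
      · exact absurd h hj0
    refine ⟨t.card, fun i => lam (t.equivFin.symm i), fun i => u (t.equivFin.symm i),
      fun i => hlamt _ (t.equivFin.symm i).2, ?_, fun i => hnorm _, ?_, ?_⟩
    · exact (Equiv.sum_comp t.equivFin.symm fun x : {x // x ∈ t} => lam ↑x).trans
        (Finset.sum_coe_sort t lam) |>.trans htr_t
    · rw [hsum_t]
      exact ((Equiv.sum_comp t.equivFin.symm fun x : {x // x ∈ t} =>
        ((lam ↑x : ℝ) : ℂ) • Matrix.vecMulVec (u ↑x) (star (u ↑x))).trans
        (Finset.sum_coe_sort t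
          (fun i => ((lam i : ℝ) : ℂ) • Matrix.vecMulVec (u i) (star (u i))))).symm
    · refine ⟨t.equivFin ⟨k1, hk1⟩, ?_⟩
      intro hmcs
      have hdiag := diag_of_inSMCS hmcs j0
      simp only [Equiv.symm_apply_apply] at hdiag
      simp only [Matrix.vecMulVec_apply, Pi.star_apply, hk1j0, zero_mul] at hdiag
      exact hdne hdiag.symm
  · -- Case A : some coordinate where both eigenvectors are nonzero
    push_neg at hcase
    obtain ⟨j0, hj0⟩ := hcase
    have ha : u k1 j0 ≠ 0 := fun h => hj0 (by rw [h, zero_mul])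
    have hb : u k2 j0 ≠ 0 := fun h => hj0 (by rw [h, mul_zero])
    have hl1 : 0 < lam k1 := hlamt _ hk1
    have hl2 : 0 < lam k2 := hlamt _ hk2
    set s : ℝ := lam k1 + lam k2 with hs
    have hspos : 0 < s := by positivity
    set α : ℝ := Real.sqrt (lam k1 / s) with hα
    set β : ℝ := Real.sqrt (lam k2 / s) with hβ
    have hα2 : α ^ 2 = lam k1 / s := Real.sq_sqrt (by positivity)
    have hβ2 : β ^ 2 = lam k2 / s := Real.sq_sqrt (by positivity)
    have hαpos : 0 < α := Real.sqrt_pos.mpr (by positivity)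
    have hβpos : 0 < β := Real.sqrt_pos.mpr (by positivity)
    have hα2R : α ^ 2 * (lam k1 + lam k2) = lam k1 := by
      rw [hα2, ← hs]; field_simp
    have hβ2R : β ^ 2 * (lam k1 + lam k2) = lam k2 := by
      rw [hβ2, ← hs]; field_simp
    have hα2C : ((α:ℂ)) ^ 2 * (((lam k1 : ℝ):ℂ) + ((lam k2 : ℝ):ℂ)) = ((lam k1 : ℝ):ℂ) := by
      have := congrArg (fun x : ℝ => (x : ℂ)) hα2R
      push_cast at this
      exact this
    have hβ2C : ((β:ℂ)) ^ 2 * (((lam k1 : ℝ):ℂ) + ((lam k2 : ℝ):ℂ)) = ((lam k2 : ℝ):ℂ) := by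
      have := congrArg (fun x : ℝ => (x : ℂ)) hβ2R
      push_cast at this
      exact this
    have hαβR : α ^ 2 + β ^ 2 = 1 := by
      rw [hα2, hβ2, ← add_div, ← hs, div_self hspos.ne']
    have hαβC : ((α:ℂ)) ^ 2 + ((β:ℂ)) ^ 2 = 1 := by
      have := congrArg (fun x : ℝ => (x : ℂ)) hαβR
      push_cast at this
      exact this
    set w : ℂ → Fin d → ℂ := fun z j => (α:ℂ) * u k1 j + z * (β:ℂ) * u k2 j with hw
    -- orthogonality facts
    have haa : ∑ j, (starRingEnd ℂ) (u k1 j) * u k1 j = 1 := by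
      have := horth k1 k1; simpa using this
    have hbb : ∑ j, (starRingEnd ℂ) (u k2 j) * u k2 j = 1 := by
      have := horth k2 k2; simpa using this
    have hab : ∑ j, (starRingEnd ℂ) (u k1 j) * u k2 j = 0 := by
      have := horth k1 k2; simpa [hne] using this
    have hba : ∑ j, (starRingEnd ℂ) (u k2 j) * u k1 j = 0 := by
      have := horth k2 k1; simpa [hne.symm] using this
    -- choose a relative phase z making one component leave S_MCS
    have hzex : ∃ z : ℂ, z * (starRingEnd ℂ) z = 1 ∧
        ¬ InSMCS (Matrix.vecMulVec (w z) (star (w z))) := by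
      by_contra hcon
      push_neg at hcon
      have hI1 : (1:ℂ) * (starRingEnd ℂ) 1 = 1 := by simp
      have hII : Complex.I * (starRingEnd ℂ) Complex.I = 1 := by
        simp [Complex.conj_I, Complex.I_mul_I]
      have hIM : (-1:ℂ) * (starRingEnd ℂ) (-1) = 1 := by simp
      have hconv : ∀ z : ℂ, Matrix.vecMulVec (w z) (star (w z)) j0 j0
          = w z j0 * (starRingEnd ℂ) (w z j0) := by
        intro z; simp [Matrix.vecMulVec_apply]
      have E1 := (hconv 1).symm.trans (diag_of_inSMCS (hcon 1 hI1) j0)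
      have EI := (hconv Complex.I).symm.trans (diag_of_inSMCS (hcon Complex.I hII) j0)
      have EM := (hconv (-1)).symm.trans (diag_of_inSMCS (hcon (-1) hIM) j0)
      simp only [hw, map_add, _root_.map_mul, Complex.conj_ofReal, Complex.conj_I,
        _root_.map_one, map_neg, one_mul, neg_mul, mul_neg, neg_neg] at E1 EI EM
      have h1 : (α:ℂ) * (β:ℂ) * (u k2 j0 * (starRingEnd ℂ) (u k1 j0)
          + u k1 j0 * (starRingEnd ℂ) (u k2 j0)) = 0 := by
        linear_combination (E1 - EM) / 2
      have hD : (α:ℂ) ^ 2 * (u k1 j0 * (starRingEnd ℂ) (u k1 j0))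
          + (β:ℂ) ^ 2 * (u k2 j0 * (starRingEnd ℂ) (u k2 j0)) = (((1:ℝ)/(d:ℝ) : ℝ) : ℂ) := by
        linear_combination (E1 + EM) / 2
      have hI2 : Complex.I * Complex.I = -1 := Complex.I_mul_I
      have h2 : (α:ℂ) * (β:ℂ) * Complex.I * (u k2 j0 * (starRingEnd ℂ) (u k1 j0)
          - u k1 j0 * (starRingEnd ℂ) (u k2 j0)) = 0 := by
        linear_combination EI - hD + ((β:ℂ) ^ 2 * (u k2 j0 * (starRingEnd ℂ) (u k2 j0))) * hI2
      have hαβne : (α:ℂ) * (β:ℂ) * Complex.I ≠ 0 :=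
        mul_ne_zero (mul_ne_zero (Complex.ofReal_ne_zero.mpr hαpos.ne')
          (Complex.ofReal_ne_zero.mpr hβpos.ne')) Complex.I_ne_zero
      have hαβne2 : (α:ℂ) * (β:ℂ) ≠ 0 :=
        mul_ne_zero (Complex.ofReal_ne_zero.mpr hαpos.ne') (Complex.ofReal_ne_zero.mpr hβpos.ne')
      have hXm : u k2 j0 * (starRingEnd ℂ) (u k1 j0) - u k1 j0 * (starRingEnd ℂ) (u k2 j0) = 0 :=
        (mul_eq_zero.mp h2).resolve_left hαβne
      have hXp : u k2 j0 * (starRingEnd ℂ) (u k1 j0) + u k1 j0 * (starRingEnd ℂ) (u k2 j0) = 0 :=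
        (mul_eq_zero.mp h1).resolve_left hαβne2
      have hX : u k2 j0 * (starRingEnd ℂ) (u k1 j0) = 0 := by
        linear_combination (hXm + hXp) / 2
      rcases mul_eq_zero.mp hX with h | h
      · exact hb h
      · exact ha (by simpa using congrArg (starRingEnd ℂ) h)
    obtain ⟨z, hz, hznot⟩ := hzex
    have hzM : (-z) * (starRingEnd ℂ) (-z) = 1 := by
      rw [map_neg]; linear_combination hz
    set t' : Finset (Fin d) := (t.erase k1).erase k2 with ht'
    have hk2e : k2 ∈ t.erase k1 := Finset.mem_erase.mpr ⟨fun h => hne h.symm, hk2⟩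
    have ht'sub : ∀ i ∈ t', i ∈ t := fun i hi =>
      Finset.mem_of_mem_erase (Finset.mem_of_mem_erase hi)
    set e := t'.equivFin with he
    refine ⟨t'.card + 2,
      Fin.snoc (Fin.snoc (fun i => lam (e.symm i)) (s / 2)) (s / 2),
      Fin.snoc (Fin.snoc (fun i => u (e.symm i)) (w z)) (w (-z)), ?_, ?_, ?_, ?_, ?_⟩
    · intro k
      refine Fin.lastCases ?_ (fun i => ?_) k
      · simp only [Fin.snoc_last]; linarith
      · rw [Fin.snoc_castSucc]
        refine Fin.lastCases ?_ (fun i' => ?_) i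
        · simp only [Fin.snoc_last]; linarith
        · rw [Fin.snoc_castSucc]
          exact hlamt _ (ht'sub _ (e.symm i').2)
    · rw [Fin.sum_univ_castSucc, Fin.sum_univ_castSucc]
      simp only [Fin.snoc_castSucc, Fin.snoc_last]
      have htrans : ∑ i : Fin t'.card, lam (e.symm i) = ∑ i ∈ t', lam i :=
        (Equiv.sum_comp e.symm fun x : {x // x ∈ t'} => lam ↑x).trans
          (Finset.sum_coe_sort t' lam)
      rw [htrans]
      have h1 : ∑ i ∈ t', lam i + lam k2 = ∑ i ∈ t.erase k1, lam i :=
        Finset.sum_erase_add _ _ hk2e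
      have h2 : ∑ i ∈ t.erase k1, lam i + lam k1 = ∑ i ∈ t, lam i :=
        Finset.sum_erase_add _ _ hk1
      rw [htr_t] at h2
      rw [hs]; linarith
    · intro k
      refine Fin.lastCases ?_ (fun i => ?_) k
      · simp only [Fin.snoc_last]
        refine sum_abs_sq_of_sum_mul_conj ?_
        exact w_norm (u k1) (u k2) α β (-z) hzM haa hbb hab hba hαβC
      · rw [Fin.snoc_castSucc]
        refine Fin.lastCases ?_ (fun i' => ?_) i
        · simp only [Fin.snoc_last]
          refine sum_abs_sq_of_sum_mul_conj ?_
          exact w_norm (u k1) (u k2) α β z hz haa hbb hab hba hαβC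
        · rw [Fin.snoc_castSucc]
          exact hnorm _
    · rw [hsum_t, ← Finset.sum_erase_add _ _ hk1, ← Finset.sum_erase_add _ _ hk2e]
      rw [Fin.sum_univ_castSucc, Fin.sum_univ_castSucc]
      simp only [Fin.snoc_castSucc, Fin.snoc_last]
      have htrans : ∑ i : Fin t'.card,
          ((lam (e.symm i) : ℝ):ℂ) • Matrix.vecMulVec (u (e.symm i)) (star (u (e.symm i)))
          = ∑ i ∈ t', ((lam i : ℝ):ℂ) • Matrix.vecMulVec (u i) (star (u i)) :=
        (Equiv.sum_comp e.symm fun x : {x // x ∈ t'} =>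
          ((lam ↑x : ℝ):ℂ) • Matrix.vecMulVec (u ↑x) (star (u ↑x))).trans
          (Finset.sum_coe_sort t'
            (fun i => ((lam i : ℝ):ℂ) • Matrix.vecMulVec (u i) (star (u i))))
      rw [htrans, add_assoc, add_assoc]
      congr 1
      have hpair := pair_split (u k1) (u k2) α β (lam k1) (lam k2) z hz hα2C hβ2C
      rw [add_comm]
      calc ((lam k1 : ℝ):ℂ) • Matrix.vecMulVec (u k1) (star (u k1))
            + ((lam k2 : ℝ):ℂ) • Matrix.vecMulVec (u k2) (star (u k2))
          = ((((lam k1 + lam k2) / 2 : ℝ)):ℂ) • Matrix.vecMulVec (w z) (star (w z))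
            + ((((lam k1 + lam k2) / 2 : ℝ)):ℂ) • Matrix.vecMulVec (w (-z)) (star (w (-z))) := by
            rw [← hpair]
        _ = (((s / 2 : ℝ)):ℂ) • Matrix.vecMulVec (w z) (star (w z))
            + (((s / 2 : ℝ)):ℂ) • Matrix.vecMulVec (w (-z)) (star (w (-z))) := by rw [hs]
    · refine ⟨(Fin.last t'.card).castSucc, ?_⟩
      rw [Fin.snoc_castSucc, Fin.snoc_last]
      exact hznot


/-- a non-pure density matrix has a pure-state ensemble decomposition
in which some component is not in S_MCS. -/
theorem mixed_state_has_decomposition_outside_SMCS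
    {d : ℕ} (ρ : Matrix (Fin d) (Fin d) ℂ) (hρ : IsDensityMatrix ρ)
    (hpure : ¬ ∃ ψ : Fin d → ℂ, (∑ j, ‖ψ j‖ ^ 2 = 1) ∧
      ρ = Matrix.vecMulVec ψ (star ψ)) :
    ∃ (N : ℕ) (q : Fin N → ℝ) (φ : Fin N → Fin d → ℂ),
      (∀ k, 0 < q k) ∧ (∑ k, q k = 1) ∧
      (∀ k, ∑ j, ‖φ k j‖ ^ 2 = 1) ∧
      ρ = ∑ k, (q k : ℂ) • Matrix.vecMulVec (φ k) (star (φ k)) ∧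
      ∃ k, ¬ InSMCS (Matrix.vecMulVec (φ k) (star (φ k))) := by
  have hH : ρ.IsHermitian := hρ.1.1
  refine main_aux ρ hρ hpure
    (fun i j => (hH.eigenvectorUnitary : Matrix (Fin d) (Fin d) ℂ) j i)
    hH.eigenvalues ?_ ?_ hρ.1.eigenvalues_nonneg
  · intro k l
    have h1 : (star (hH.eigenvectorUnitary : Matrix (Fin d) (Fin d) ℂ))
        * (hH.eigenvectorUnitary : Matrix (Fin d) (Fin d) ℂ) = 1 := by
      simpa using unitary.coe_star_mul_self hH.eigenvectorUnitary
    have h2 := congrFun (congrFun h1 k) l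
    simpa [Matrix.mul_apply, Matrix.one_apply, Matrix.star_apply] using h2
  · conv_lhs => rw [hH.spectral_theorem]
    ext i j
    simp [Matrix.mul_apply, Matrix.sum_apply, Matrix.vecMulVec_apply, Matrix.diagonal,
      Finset.sum_mul, mul_comm, mul_assoc, mul_left_comm]
end
end

section
/- For every d ≥ 3 there exist a unit vector ψ ∈ ℂ^d, real numbers k_0,…,k_{d−1} that are pairwise distinct, and a permutation σ of {0,…,d−1}, such that for K the diagonal matrix with entries k_i and P_σ the permutation matrix of σ (a unitary incoherent operation), the skew information is not preserved: ⟨ψ, K²ψ⟩ − ⟨ψ, Kψ⟩² ≠ ⟨P_σψ, K²P_σψ⟩ − ⟨P_σψ, KP_σψ⟩². Hence the skew information C_skew(·, K) is not invariant under unitary incoherent operations for d ≥ 3. -/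
open Matrix BigOperators
open scoped ComplexOrder

noncomputable section

lemma sum_two' {d : ℕ} {M : Type*} [AddCommMonoid M] (a b : Fin d) (hab : a ≠ b)
    (f : Fin d → M) (h : ∀ j, j ≠ a → j ≠ b → f j = 0) :
    ∑ j, f j = f a + f b := by
  rw [← Finset.sum_pair hab]
  refine (Finset.sum_subset (Finset.subset_univ _) ?_).symm
  intro j _ hj
  simp only [Finset.mem_insert, Finset.mem_singleton, not_or] at hj
  exact h j hj.1 hj.2

/-- for d ≥ 3, skew information (the variance of a diagonal observable
with pairwise distinct entries on a pure state) is not invariant under some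
permutation (a unitary incoherent operation). -/
theorem skew_information_not_invariant
    {d : ℕ} (hd : 3 ≤ d) :
    ∃ ψ : Fin d → ℂ, (∑ j, ‖ψ j‖ ^ 2 = 1) ∧
    ∃ k : Fin d → ℝ, Function.Injective k ∧
    ∃ σ : Equiv.Perm (Fin d),
      let K : Matrix (Fin d) (Fin d) ℂ := Matrix.diagonal fun i => (k i : ℂ)
      let φ : Fin d → ℂ := fun i => ψ (σ.symm i)
      (star ψ) ⬝ᵥ (K * K).mulVec ψ - ((star ψ) ⬝ᵥ K.mulVec ψ) ^ 2 ≠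
      (star φ) ⬝ᵥ (K * K).mulVec φ - ((star φ) ⬝ᵥ K.mulVec φ) ^ 2 := by
  set i0 : Fin d := ⟨0, by omega⟩ with hi0
  set i1 : Fin d := ⟨1, by omega⟩ with hi1
  set i2 : Fin d := ⟨2, by omega⟩ with hi2
  have h01 : i0 ≠ i1 := by simp [hi0, hi1, Fin.ext_iff]
  have h02 : i0 ≠ i2 := by simp [hi0, hi2, Fin.ext_iff]
  have h12 : i1 ≠ i2 := by simp [hi1, hi2, Fin.ext_iff]
  set c : ℂ := (((Real.sqrt 2)⁻¹ : ℝ) : ℂ) with hc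
  have hcc : c * c = 2⁻¹ := by
    rw [hc, ← Complex.ofReal_mul, ← mul_inv, Real.mul_self_sqrt (by norm_num)]
    norm_num
  have hsc : star c = c := by rw [hc]; exact Complex.conj_ofReal _
  set ψ : Fin d → ℂ := fun j => if j = i0 then c else if j = i1 then c else 0 with hψ
  have key : ∀ (w v : Fin d → ℂ) (a b : Fin d), a ≠ b →
      (∀ j, j ≠ a → j ≠ b → v j = 0) →
      (star v) ⬝ᵥ (Matrix.diagonal w).mulVec v
        = star (v a) * (w a * v a) + star (v b) * (w b * v b) := by
    intro w v a b hab hv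
    simp only [dotProduct, Pi.star_apply, Matrix.mulVec_diagonal]
    exact sum_two' a b hab _ (fun j h1 h2 => by simp [hv j h1 h2])
  refine ⟨ψ, ?_, fun j => (j.val : ℝ), ?_, Equiv.swap i1 i2, ?_⟩
  · rw [sum_two' i0 i1 h01 _ (by intro j h1 h2; simp [hψ, h1, h2])]
    have habs : ‖c‖ ^ 2 = 2⁻¹ := by
      rw [hc, Complex.norm_real, Real.norm_eq_abs, sq_abs, inv_pow, Real.sq_sqrt (by norm_num)]
    simp [hψ, Ne.symm h01, habs]
    norm_num
  · intro a b hab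
    exact Fin.ext (Nat.cast_injective hab)
  · intro K φ
    have hφ : φ = fun j => if j = i0 then c else if j = i2 then c else 0 := by
      funext j
      simp only [φ, Equiv.symm_swap]
      rcases eq_or_ne j i0 with rfl | hj0
      · rw [Equiv.swap_apply_of_ne_of_ne h01 h02]
        simp [hψ]
      rcases eq_or_ne j i1 with rfl | hj1
      · rw [Equiv.swap_apply_left]
        simp [hψ, Ne.symm h02, Ne.symm h12, Ne.symm h01, h12]
      rcases eq_or_ne j i2 with rfl | hj2
      · rw [Equiv.swap_apply_right]
        simp [hψ, Ne.symm h01, Ne.symm h02, Ne.symm h12, h12]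
      · rw [Equiv.swap_apply_of_ne_of_ne hj1 hj2]
        simp [hψ, hj0, hj1, hj2]
    have hψ0 : ψ i0 = c := by simp [hψ]
    have hψ1 : ψ i1 = c := by simp [hψ, Ne.symm h01]
    have hφ0 : φ i0 = c := by rw [hφ]; simp
    have hφ2 : φ i2 = c := by rw [hφ]; simp [Ne.symm h02]
    have hv0 : ((i0.val : ℝ) : ℂ) = 0 := by norm_num [hi0]
    have hv1 : ((i1.val : ℝ) : ℂ) = 1 := by norm_num [hi1]
    have hv2 : ((i2.val : ℝ) : ℂ) = 2 := by norm_num [hi2]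
    have hK2 : K * K = Matrix.diagonal (fun i => ((i.val : ℝ) : ℂ) * ((i.val : ℝ) : ℂ)) := by
      show Matrix.diagonal _ * Matrix.diagonal _ = _
      rw [Matrix.diagonal_mul_diagonal]
    have hK : K = Matrix.diagonal (fun i => ((i.val : ℝ) : ℂ)) := rfl
    have hφz : ∀ j, j ≠ i0 → j ≠ i2 → φ j = 0 := by
      intro j h1 h2; rw [hφ]; simp [h1, h2]
    have hψz : ∀ j, j ≠ i0 → j ≠ i1 → ψ j = 0 := by
      intro j h1 h2; simp [hψ, h1, h2]
    have A1 : (star ψ) ⬝ᵥ (K * K).mulVec ψ = 2⁻¹ := by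
      rw [hK2, key _ _ i0 i1 h01 hψz, hψ0, hψ1, hsc, hv0, hv1]
      linear_combination hcc
    have A2 : (star ψ) ⬝ᵥ K.mulVec ψ = 2⁻¹ := by
      rw [hK, key _ _ i0 i1 h01 hψz, hψ0, hψ1, hsc, hv0, hv1]
      linear_combination hcc
    have B1 : (star φ) ⬝ᵥ (K * K).mulVec φ = 2 := by
      rw [hK2, key _ _ i0 i2 h02 hφz, hφ0, hφ2, hsc, hv0, hv2]
      linear_combination 4 * hcc
    have B2 : (star φ) ⬝ᵥ K.mulVec φ = 1 := by
      rw [hK, key _ _ i0 i2 h02 hφz, hφ0, hφ2, hsc, hv0, hv2]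
      linear_combination 2 * hcc
    rw [A1, A2, B1, B2]
    norm_num
end
end
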